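/- arXiv:1211.1306 — 5 statements merged into one kernel-verified Lean document; each statement's English description precedes it below -/
import Mathlib

section
/- Every bipartite multigraph in which every vertex has maximum degree at most 3, where each edge e is assigned a permutation r_e of {0,1,2,3}, admits a 4-colouring f : E → {0,1,2,3} such that for any two distinct edges e, g sharing an endvertex in the class A, f(e) ≠ f(g), and for any two distinct edges e, g sharing an endvertex in the class B, r_e(f(e)) ≠ r_g(f(g)). -/
set_option maxHeartbeats 1000000
open Finset

namespace DPS

lemma exists_notMem (s : Finset (Fin 4)) (h : s.card < 4) : ∃ c, c ∉ s := by
  by_contra hc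
  push_neg at hc
  have hs : (Finset.univ : Finset (Fin 4)) ⊆ s := fun c _ => hc c
  have := Finset.card_le_card hs
  simp at this; omega

noncomputable def pick (s : Finset (Fin 4)) : Fin 4 :=
  if h : s.Nonempty then h.choose else 0

lemma pick_mem {s : Finset (Fin 4)} (h : s.Nonempty) : pick s ∈ s := by
  rw [pick, dif_pos h]; exact h.choose_spec

section Cycle
variable {n : ℕ} [NeZero n]

lemma zmod_cast_val (z : ZMod n) : ((z.val : ℕ) : ZMod n) = z :=
  (ZMod.natCast_val z).trans (ZMod.cast_id' ▸ rfl)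

/-- Satisfiability of the cyclic constraint system. -/
def CycSat (p : ZMod n → Equiv.Perm (Fin 4)) (L : ZMod n → Finset (Fin 4)) : Prop :=
  ∃ w : ZMod n → Fin 4, ∀ k, w k ∈ L k ∧ w (k + 1) ≠ p k (w k)

lemma zmod_val_sub_one {z : ZMod n} (hz : z ≠ 0) : (z - 1).val = z.val - 1 ∧ 1 ≤ z.val := by
  have h1 : 1 ≤ z.val := by
    rcases Nat.eq_zero_or_pos z.val with h | h
    · exact absurd ((ZMod.val_eq_zero z).mp h) hz
    · exact h
  refine ⟨?_, h1⟩
  have hzv : ((z.val : ℕ) : ZMod n) = z := zmod_cast_val z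
  have h2 : z - 1 = ((z.val - 1 : ℕ) : ZMod n) := by
    rw [Nat.cast_sub h1, hzv]; simp
  rw [h2, ZMod.val_natCast, Nat.mod_eq_of_lt]
  have := ZMod.val_lt z; omega

/-- The unified "slack" lemma: if one position has a value whose forced exclusion
leaves 2 colours at the next position, the cycle can be coloured by backward greedy. -/
theorem cycSat_slack (hn : 2 ≤ n) (p : ZMod n → Equiv.Perm (Fin 4))
    (L : ZMod n → Finset (Fin 4)) (hL : ∀ k, 2 ≤ (L k).card)
    (k0 : ZMod n) (w0 : Fin 4) (hw0 : w0 ∈ L k0)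
    (hs : 2 ≤ ((L (k0 + 1)).erase (p k0 w0)).card) : CycSat p L := by
  classical
  let tgt : ℕ → Fin 4 → Finset (Fin 4) := fun i x =>
    if i + 2 = n then ((L (k0 + 1)).erase (p k0 w0)).erase ((p (k0 + 1)).symm x)
    else (L (k0 - (i + 1 : ℕ))).erase ((p (k0 - (i + 1 : ℕ))).symm x)
  have htgt : ∀ i x, (tgt i x).Nonempty := by
    intro i x
    by_cases h : i + 2 = n
    · have hEq : tgt i x = ((L (k0 + 1)).erase (p k0 w0)).erase ((p (k0 + 1)).symm x) := by
        simp only [tgt]; rw [if_pos h]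
      rw [hEq, ← Finset.card_pos]
      have := Finset.pred_card_le_card_erase
        (s := (L (k0 + 1)).erase (p k0 w0)) (a := (p (k0 + 1)).symm x)
      omega
    · have hEq : tgt i x = (L (k0 - (i + 1 : ℕ))).erase ((p (k0 - (i + 1 : ℕ))).symm x) := by
        simp only [tgt]; rw [if_neg h]
      rw [hEq, ← Finset.card_pos]
      have h1 := Finset.pred_card_le_card_erase (s := L (k0 - (i + 1 : ℕ)))
        (a := (p (k0 - (i + 1 : ℕ))).symm x)
      have h2 := hL (k0 - (i + 1 : ℕ))
      omega
  let v : ℕ → Fin 4 := fun i => Nat.rec w0 (fun i vi => pick (tgt i vi)) i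
  have hv0 : v 0 = w0 := rfl
  have hvs : ∀ i, v (i + 1) = pick (tgt i (v i)) := fun i => rfl
  have hvmem : ∀ i, v (i + 1) ∈ tgt i (v i) := fun i => pick_mem (htgt i (v i))
  have hkey : ∀ i : ℕ, v (i + 1) ∈ L (k0 - (i + 1 : ℕ)) ∧
      v (i + 1) ≠ (p (k0 - (i + 1 : ℕ))).symm (v i) ∧
      (i + 2 = n → v (i + 1) ≠ p k0 w0) := by
    intro i
    have hp := hvmem i
    by_cases h : i + 2 = n
    · have hEq : tgt i (v i) = ((L (k0 + 1)).erase (p k0 w0)).erase ((p (k0 + 1)).symm (v i)) := by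
        simp only [tgt]; rw [if_pos h]
      rw [hEq] at hp
      have h1 : ((i + 1 : ℕ) : ZMod n) = -1 := by
        have h0 : ((i + 2 : ℕ) : ZMod n) = 0 := by rw [h]; simp
        push_cast at h0 ⊢
        linear_combination h0
      have h2 : k0 - ((i + 1 : ℕ) : ZMod n) = k0 + 1 := by rw [h1]; ring
      rw [h2]
      exact ⟨Finset.mem_of_mem_erase (Finset.mem_of_mem_erase hp),
        Finset.ne_of_mem_erase hp,
        fun _ => Finset.ne_of_mem_erase (Finset.mem_of_mem_erase hp)⟩
    · have hEq : tgt i (v i) = (L (k0 - (i + 1 : ℕ))).erase ((p (k0 - (i + 1 : ℕ))).symm (v i)) := by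
        simp only [tgt]; rw [if_neg h]
      rw [hEq] at hp
      exact ⟨Finset.mem_of_mem_erase hp, Finset.ne_of_mem_erase hp, fun hcon => absurd hcon h⟩
  have hmem : ∀ i : ℕ, v i ∈ L (k0 - (i : ℕ)) := by
    intro i
    cases i with
    | zero => simpa [hv0] using hw0
    | succ i => exact (hkey i).1
  refine ⟨fun kk => v ((k0 - kk).val), fun kk => ?_⟩
  constructor
  · show v ((k0 - kk).val) ∈ L kk
    have := hmem ((k0 - kk).val)
    rwa [zmod_cast_val, sub_sub_cancel] at this
  · show v ((k0 - (kk + 1)).val) ≠ p kk (v ((k0 - kk).val))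
    by_cases hk : kk = k0
    · rw [hk]
      have h0 : (k0 - k0).val = 0 := by simp
      have he : ((n - 1 : ℕ) : ZMod n) = -1 := by
        rw [Nat.cast_sub (by omega : 1 ≤ n), ZMod.natCast_self]; ring
      have h1 : (k0 - (k0 + 1)).val = n - 1 := by
        rw [show k0 - (k0 + 1) = -1 by ring, ← he, ZMod.val_natCast,
          Nat.mod_eq_of_lt (by omega)]
      rw [h0, h1, hv0]
      have hn1 : n - 1 = (n - 2) + 1 := by omega
      rw [hn1]
      exact ((hkey (n - 2)).2.2 (by omega))
    · have hz : k0 - kk ≠ 0 := by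
        intro h; exact hk (sub_eq_zero.mp h).symm
      obtain ⟨hval, hge⟩ := zmod_val_sub_one hz
      have h2 : (k0 - (kk + 1)).val = (k0 - kk).val - 1 := by
        rw [show k0 - (kk + 1) = (k0 - kk) - 1 by ring, hval]
      have h3 : (((k0 - kk).val : ℕ) : ZMod n) = k0 - kk := zmod_cast_val _
      have hc := (hkey ((k0 - kk).val - 1)).2.1
      have hnat : ((k0 - kk).val - 1) + 1 = (k0 - kk).val := by omega
      rw [hnat] at hc
      rw [h3, sub_sub_cancel] at hc
      rw [h2]
      intro hcontra
      exact hc (by rw [hcontra, Equiv.symm_apply_apply])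

/-- Extraction: if the slack hypothesis fails everywhere, all lists have size 2
and forced values always land in the next list. -/
theorem aligned_of_no_slack (p : ZMod n → Equiv.Perm (Fin 4))
    (L : ZMod n → Finset (Fin 4)) (hL : ∀ k, 2 ≤ (L k).card)
    (h : ¬ ∃ (k0 : ZMod n) (w0 : Fin 4), w0 ∈ L k0 ∧ 2 ≤ ((L (k0 + 1)).erase (p k0 w0)).card) :
    ∀ k, (L k).card = 2 ∧ ∀ w ∈ L k, p k w ∈ L (k + 1) := by
  push_neg at h
  intro k
  have hmemnext : ∀ w ∈ L k, p k w ∈ L (k + 1) := by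
    intro w hw
    by_contra hnot
    have := h k w hw
    rw [Finset.erase_eq_of_notMem hnot] at this
    exact absurd (hL (k + 1)) (by omega)
  refine ⟨?_, hmemnext⟩
  -- card of L k = 2 : use position k-1
  obtain ⟨w, hw⟩ := Finset.card_pos.mp (by have := hL (k - 1); omega : 0 < (L (k - 1)).card)
  have := h (k - 1) w hw
  have hkk : (k - 1) + 1 = k := by ring
  rw [hkk] at this
  have h1 := Finset.pred_card_le_card_erase (s := L k) (a := p (k - 1) w)
  have := hL k
  omega

/-- Setwise alignment. -/
theorem aligned_image (p : ZMod n → Equiv.Perm (Fin 4)) (L : ZMod n → Finset (Fin 4))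
    (hcard : ∀ k, (L k).card = 2) (hal : ∀ k, ∀ w ∈ L k, p k w ∈ L (k + 1)) (k : ZMod n) :
    (L k).image (p k) = L (k + 1) := by
  apply Finset.eq_of_subset_of_card_le
  · intro c hc
    obtain ⟨w, hw, rfl⟩ := Finset.mem_image.mp hc
    exact hal k w hw
  · rw [Finset.card_image_of_injective _ (p k).injective, hcard, hcard]
end Cycle
end DPS

noncomputable section
open scoped Classical

variable {A B E : Type} [Fintype E] [DecidableEq A] [DecidableEq B]

/-- The endpoint of an edge on side `b` (`false` = the `A` side, `true` = the `B` side). -/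
def ev (ea : E → A) (eb : E → B) (e : E) (b : Bool) : A ⊕ B :=
  if b then Sum.inr (eb e) else Sum.inl (ea e)

lemma ev_side {ea : E → A} {eb : E → B} {e g : E} {b b' : Bool}
    (h : ev ea eb e b = ev ea eb g b') : b = b' := by
  cases b <;> cases b' <;> simp [ev] at h ⊢

/-- Context for the 3-regular case: a bipartite multigraph in which every
endpoint of every edge has degree exactly 3, together with a perfect matching. -/
structure Ctx (A B E : Type) [Fintype E] [DecidableEq A] [DecidableEq B] : Type where
  ea : E → A
  eb : E → B
  r : E → Equiv.Perm (Fin 4)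
  M : Finset E
  matched : ∀ (e : E) (b : Bool), ∃! m : E, m ∈ M ∧ ev ea eb m b = ev ea eb e b
  deg3 : ∀ (e : E) (b : Bool),
    (Finset.univ.filter fun x => ev ea eb x b = ev ea eb e b).card = 3

namespace Ctx
variable (C : Ctx A B E)

def evC (e : E) (b : Bool) : A ⊕ B := ev C.ea C.eb e b

/-- The "view" of an edge at its side-`b` endpoint. -/
def vwC (e : E) (b : Bool) : Equiv.Perm (Fin 4) := if b then C.r e else 1

/-- Desired conclusion: proper at every endpoint after applying views. -/
def Proper (f : E → Fin 4) : Prop :=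
  ∀ e g : E, ∀ b : Bool, e ≠ g → C.evC e b = C.evC g b →
    C.vwC e b (f e) ≠ C.vwC g b (f g)

/-- The matching edge at the side-`b` endpoint of `e`. -/
def mAtE (e : E) (b : Bool) : E := (C.matched e b).exists.choose

lemma mAtE_mem (e : E) (b : Bool) : C.mAtE e b ∈ C.M :=
  (C.matched e b).exists.choose_spec.1

lemma mAtE_ev (e : E) (b : Bool) : C.evC (C.mAtE e b) b = C.evC e b :=
  (C.matched e b).exists.choose_spec.2

lemma mAtE_unique {m e : E} {b : Bool} (hm : m ∈ C.M) (hev : C.evC m b = C.evC e b) :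
    m = C.mAtE e b := by
  obtain ⟨m', hm', huniq⟩ := C.matched e b
  rw [huniq m ⟨hm, hev⟩, huniq (C.mAtE e b) ⟨C.mAtE_mem e b, C.mAtE_ev e b⟩]

lemma mAtE_congr {e e' : E} {b : Bool} (h : C.evC e b = C.evC e' b) :
    C.mAtE e b = C.mAtE e' b :=
  C.mAtE_unique (C.mAtE_mem e b) ((C.mAtE_ev e b).trans h)

lemma rcount (e : E) (b : Bool) :
    (Finset.univ.filter fun x => x ∉ C.M ∧ C.evC x b = C.evC e b).card = 2 := by
  have h3 := C.deg3 e b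
  set s := Finset.univ.filter fun x => ev C.ea C.eb x b = ev C.ea C.eb e b with hs
  have hsplit : s.filter (fun x => x ∈ C.M) ∪ s.filter (fun x => x ∉ C.M) = s :=
    Finset.filter_union_filter_not_eq _ s
  have hdisj : Disjoint (s.filter (fun x => x ∈ C.M)) (s.filter (fun x => x ∉ C.M)) :=
    Finset.disjoint_filter_filter_not s s _
  have hM1 : s.filter (fun x => x ∈ C.M) = {C.mAtE e b} := by
    apply Finset.eq_singleton_iff_unique_mem.mpr
    constructor
    · simp only [hs, Finset.mem_filter, Finset.mem_univ, true_and]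
      exact ⟨C.mAtE_ev e b, C.mAtE_mem e b⟩
    · intro x hx
      simp only [hs, Finset.mem_filter, Finset.mem_univ, true_and] at hx
      exact C.mAtE_unique hx.2 hx.1
  have hcard : s.card = 3 := h3
  have h2 : (s.filter (fun x => x ∉ C.M)).card = 2 := by
    have := Finset.card_union_of_disjoint hdisj
    rw [hsplit, hM1] at this
    simp at this
    omega
  rw [← h2]
  congr 1
  ext x
  simp only [hs, Finset.mem_filter, Finset.mem_univ, true_and, evC]
  simp [Finset.mem_filter, and_comm]

/-- The non-matching edges. -/
def R (C : Ctx A B E) : Type := {x : E // x ∉ C.M}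

instance : Fintype C.R := by unfold R; infer_instance
instance : DecidableEq C.R := by unfold R; infer_instance

lemma other_exists_unique (x : C.R) (b : Bool) :
    ∃! y : C.R, y ≠ x ∧ C.evC y.1 b = C.evC x.1 b := by
  have h2 := C.rcount x.1 b
  set s := Finset.univ.filter fun z => z ∉ C.M ∧ C.evC z b = C.evC x.1 b with hs
  have hx : x.1 ∈ s := by
    refine Finset.mem_filter.mpr ⟨Finset.mem_univ _, x.2, rfl⟩
  have h1 : (s.erase x.1).card = 1 := by
    rw [Finset.card_erase_of_mem hx, h2]
  obtain ⟨y0, hy0⟩ := Finset.card_eq_one.mp h1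
  have hy0mem : y0 ∈ s.erase x.1 := by rw [hy0]; exact Finset.mem_singleton_self y0
  have hy0ne : y0 ≠ x.1 := Finset.ne_of_mem_erase hy0mem
  have hy0s := Finset.mem_of_mem_erase hy0mem
  simp only [hs, Finset.mem_filter, Finset.mem_univ, true_and] at hy0s
  refine ⟨⟨y0, hy0s.1⟩, ⟨fun hc => hy0ne (congrArg Subtype.val hc), hy0s.2⟩, ?_⟩
  intro y hy
  apply Subtype.ext
  have : y.1 ∈ s.erase x.1 := by
    apply Finset.mem_erase.mpr
    refine ⟨fun hc => hy.1 (Subtype.ext hc), ?_⟩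
    simp only [hs, Finset.mem_filter, Finset.mem_univ, true_and]
    exact ⟨y.2, hy.2⟩
  rw [hy0] at this
  exact Finset.mem_singleton.mp this

/-- The other non-matching edge at the side-`b` endpoint of `x`. -/
def other (x : C.R) (b : Bool) : C.R := (C.other_exists_unique x b).exists.choose

lemma other_ne (x : C.R) (b : Bool) : C.other x b ≠ x :=
  (C.other_exists_unique x b).exists.choose_spec.1

lemma other_ev (x : C.R) (b : Bool) : C.evC (C.other x b).1 b = C.evC x.1 b :=
  (C.other_exists_unique x b).exists.choose_spec.2

lemma other_unique {x y : C.R} {b : Bool} (hne : y ≠ x) (hev : C.evC y.1 b = C.evC x.1 b) :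
    y = C.other x b := by
  obtain ⟨y', hy', huniq⟩ := C.other_exists_unique x b
  rw [huniq y ⟨hne, hev⟩, huniq (C.other x b) ⟨C.other_ne x b, C.other_ev x b⟩]

lemma other_other (x : C.R) (b : Bool) : C.other (C.other x b) b = x := by
  symm
  apply C.other_unique (Ne.symm (C.other_ne x b)) (C.other_ev x b).symm


/-- The step permutation on (non-matching edge, side) states. -/
def T : Equiv.Perm (C.R × Bool) where
  toFun z := (C.other z.1 z.2, !z.2)
  invFun z := (C.other z.1 (!z.2), !z.2)
  left_inv := by
    rintro ⟨e, b⟩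
    simp [Bool.not_not, C.other_other]
  right_inv := by
    rintro ⟨e, b⟩
    simp [Bool.not_not, C.other_other]

lemma T_apply (z : C.R × Bool) : C.T z = (C.other z.1 z.2, !z.2) := rfl
lemma T_symm_apply (z : C.R × Bool) : C.T.symm z = (C.other z.1 (!z.2), !z.2) := rfl

variable (e0 : C.R)

def nO : ℕ := Function.minimalPeriod (⇑C.T) (e0, false)
def sE : ℕ → C.R := fun i => ((⇑C.T)^[i] (e0, false)).1
def sB : ℕ → Bool := fun i => ((⇑C.T)^[i] (e0, false)).2

lemma n_pos : 0 < C.nO e0 := by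
  have h : (⇑C.T)^[orderOf C.T] (e0, false) = (C.T ^ (orderOf C.T)) (e0, false) := by
    induction (orderOf C.T) with
    | zero => simp
    | succ k ih => rw [Function.iterate_succ_apply', ih, pow_succ', Equiv.Perm.mul_apply]
  have hper : Function.IsPeriodicPt (⇑C.T) (orderOf C.T) (e0, false) := by
    unfold Function.IsPeriodicPt Function.IsFixedPt
    rw [h, pow_orderOf_eq_one]; rfl
  exact hper.minimalPeriod_pos (orderOf_pos C.T)

instance : NeZero (C.nO e0) := ⟨(C.n_pos e0).ne'⟩

lemma iterate_nO : (⇑C.T)^[C.nO e0] (e0, false) = (e0, false) :=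
  Function.iterate_minimalPeriod

lemma sE_mod (i : ℕ) : C.sE e0 (i % C.nO e0) = C.sE e0 i := by
  unfold sE nO
  rw [Function.iterate_mod_minimalPeriod_eq]

lemma sB_mod (i : ℕ) : C.sB e0 (i % C.nO e0) = C.sB e0 i := by
  unfold sB nO
  rw [Function.iterate_mod_minimalPeriod_eq]

lemma sE_succ (i : ℕ) : C.sE e0 (i + 1) = C.other (C.sE e0 i) (C.sB e0 i) := by
  unfold sE sB
  rw [Function.iterate_succ_apply']
  rfl

lemma sB_succ (i : ℕ) : C.sB e0 (i + 1) = !(C.sB e0 i) := by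
  unfold sB
  rw [Function.iterate_succ_apply']
  rfl

lemma sB_zero : C.sB e0 0 = false := rfl
lemma sE_zero : C.sE e0 0 = e0 := rfl

lemma sB_parity (i : ℕ) : C.sB e0 i = decide (i % 2 = 1) := by
  induction i with
  | zero => simp [C.sB_zero]
  | succ i ih =>
    rw [C.sB_succ, ih]
    by_cases h : i % 2 = 1
    · have h2 : (i + 1) % 2 = 0 := by omega
      simp [h, h2]
    · have h0 : i % 2 = 0 := by omega
      have h2 : (i + 1) % 2 = 1 := by omega
      simp [h0, h2]

lemma nO_even : C.nO e0 % 2 = 0 := by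
  have h1 : C.sB e0 (C.nO e0) = false := by
    unfold sB; rw [C.iterate_nO e0]
  rw [C.sB_parity] at h1
  simp at h1
  omega

lemma nO_two_le : 2 ≤ C.nO e0 := by
  have h1 := C.n_pos e0
  have h2 := C.nO_even e0
  omega

lemma sE_inj {i j : ℕ} (hi : i < C.nO e0) (hj : j < C.nO e0) (hij : C.sE e0 i = C.sE e0 j) :
    i = j := by
  -- auxiliary J machinery
  set Tf := (⇑C.T : C.R × Bool → C.R × Bool) with hTf
  set Tg := (⇑C.T.symm : C.R × Bool → C.R × Bool) with hTg
  have hJT : ∀ z : C.R × Bool, ((C.T z).1, !(C.T z).2) = C.T.symm (z.1, !z.2) := by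
    rintro ⟨e, b⟩
    simp [C.T_apply, C.T_symm_apply, Bool.not_not]
  have hJTk : ∀ (k : ℕ) (z : C.R × Bool),
      ((Tf^[k] z).1, !(Tf^[k] z).2) = Tg^[k] (z.1, !z.2) := by
    intro k
    induction k with
    | zero => intro z; simp
    | succ k ih =>
      intro z
      rw [Function.iterate_succ_apply', Function.iterate_succ_apply']
      rw [hTf, hJT (Tf^[k] z), ← ih z]
  have hcancel : ∀ (k : ℕ) (z : C.R × Bool), Tg^[k] (Tf^[k] z) = z := by
    intro k
    induction k with
    | zero => intro z; simp
    | succ k ih =>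
      intro z
      rw [Function.iterate_succ_apply (f := Tg), Function.iterate_succ_apply' (f := Tf)]
      rw [hTg, hTf]
      simp only [Equiv.symm_apply_apply]
      exact ih z
  -- main argument
  suffices hmain : ∀ i j : ℕ, i < j → j < C.nO e0 → C.sE e0 i = C.sE e0 j → False by
    rcases lt_trichotomy i j with h | h | h
    · exact absurd hij (fun hij => hmain i j h hj hij)
    · exact h
    · exact absurd hij.symm (fun hij => hmain j i h hi hij)
  clear hi hj hij i j
  intro i j hlt hj hij
  set x0 : C.R × Bool := (e0, false) with hx0
  have hne : Tf^[i] x0 ≠ Tf^[j] x0 := by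
    intro hc
    have := Function.iterate_injOn_Iio_minimalPeriod (f := Tf) (x := x0)
      (Set.mem_Iio.mpr (lt_trans hlt hj)) (Set.mem_Iio.mpr hj) hc
    omega
  have hfst : (Tf^[i] x0).1 = (Tf^[j] x0).1 := hij
  have hsnd : (Tf^[j] x0).2 = !(Tf^[i] x0).2 := by
    rcases Bool.eq_false_or_eq_true (Tf^[i] x0).2 with h1 | h1 <;>
      rcases Bool.eq_false_or_eq_true (Tf^[j] x0).2 with h2 | h2 <;>
      simp [h1, h2] at hne hfst ⊢ <;>
      first
      | rfl
      | (exact absurd (Prod.ext hfst (by rw [h1, h2])) hne)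
  set u := Tf^[i] x0 with hu
  have hkey : Tf^[j - i] u = (u.1, !u.2) := by
    have : Tf^[(j - i) + i] x0 = Tf^[j - i] u := by
      rw [Function.iterate_add_apply]
    rw [show (j - i) + i = j by omega] at this
    rw [← this]
    exact Prod.ext hfst.symm hsnd
  set d := j - i with hd
  have hdpos : 0 < d := by omega
  rcases Nat.even_or_odd d with ⟨c, hc⟩ | ⟨c, hc⟩
  · -- even case
    have h1 : ((Tf^[c] u).1, !(Tf^[c] u).2) = Tf^[c] u := by
      rw [hJTk c u]
      have : Tg^[c] (u.1, !u.2) = Tg^[c] (Tf^[d] u) := by rw [hkey]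
      rw [this, hc, Function.iterate_add_apply Tf c c u]
      exact hcancel c (Tf^[c] u)
    have := congrArg Prod.snd h1
    simp at this
  · -- odd case
    have h1 : ((Tf^[c + 1] u).1, !(Tf^[c + 1] u).2) = Tf^[c] u := by
      rw [hJTk (c + 1) u]
      have : Tg^[c + 1] (u.1, !u.2) = Tg^[c + 1] (Tf^[d] u) := by rw [hkey]
      rw [this, show d = (c + 1) + c by omega, Function.iterate_add_apply Tf (c + 1) c u]
      exact hcancel (c + 1) (Tf^[c] u)
    have h2 : Tf^[c + 1] u = Tf (Tf^[c] u) := Function.iterate_succ_apply' Tf c u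
    set w := Tf^[c] u with hw
    -- h1 : ((Tf w).1, !(Tf w).2) = w
    rw [h2] at h1
    have hfst2 : (Tf w).1 = w.1 := by conv_rhs => rw [← h1]
    have : C.other w.1 w.2 = w.1 := hfst2
    exact absurd (congrArg Subtype.val this) (by
      have := C.other_ne w.1 w.2
      exact fun hc2 => this (Subtype.ext hc2))

def sc : ZMod (C.nO e0) → C.R := fun k => C.sE e0 k.val
def bz : ZMod (C.nO e0) → Bool := fun k => C.sB e0 k.val

lemma val_add_one (k : ZMod (C.nO e0)) : (k + 1).val = (k.val + 1) % C.nO e0 := by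
  haveI : Fact (1 < C.nO e0) := ⟨C.nO_two_le e0⟩
  rw [ZMod.val_add, ZMod.val_one]

lemma sc_succ (k : ZMod (C.nO e0)) :
    C.sc e0 (k + 1) = C.other (C.sc e0 k) (C.bz e0 k) := by
  unfold sc bz
  rw [C.val_add_one, C.sE_mod, C.sE_succ]

lemma bz_succ (k : ZMod (C.nO e0)) : C.bz e0 (k + 1) = !(C.bz e0 k) := by
  unfold bz
  rw [C.val_add_one, C.sB_mod, C.sB_succ]

lemma sc_inj : Function.Injective (C.sc e0) := by
  intro k k' h
  have := C.sE_inj e0 (ZMod.val_lt k) (ZMod.val_lt k') h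
  have h2 : ((k.val : ℕ) : ZMod (C.nO e0)) = ((k'.val : ℕ) : ZMod (C.nO e0)) := by rw [this]
  rwa [DPS.zmod_cast_val, DPS.zmod_cast_val] at h2

lemma bz_cast (i : ℕ) : C.bz e0 ((i : ℕ) : ZMod (C.nO e0)) = decide (i % 2 = 1) := by
  unfold bz
  rw [ZMod.val_natCast, C.sB_mod, C.sB_parity]

lemma bz_zeroZ : C.bz e0 0 = false := by
  have := C.bz_cast e0 0
  simpa using this

lemma bz_oneZ : C.bz e0 1 = true := by
  have := C.bz_cast e0 1
  simpa using this

lemma bz_neg_oneZ : C.bz e0 (-1) = true := by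
  have he : ((C.nO e0 - 1 : ℕ) : ZMod (C.nO e0)) = -1 := by
    rw [Nat.cast_sub (by have := C.n_pos e0; omega : 1 ≤ C.nO e0), ZMod.natCast_self]; ring
  rw [← he, C.bz_cast]
  have h1 := C.nO_even e0
  have h2 := C.nO_two_le e0
  simp only [decide_eq_true_eq]
  omega

lemma bz_neg_twoZ : C.bz e0 (-2) = false := by
  have he : ((C.nO e0 - 2 : ℕ) : ZMod (C.nO e0)) = -2 := by
    rw [Nat.cast_sub (C.nO_two_le e0), ZMod.natCast_self]; ring
  rw [← he, C.bz_cast]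
  have h1 := C.nO_even e0
  have h2 := C.nO_two_le e0
  simp only [decide_eq_false_iff_not]
  omega

lemma bz_twoZ : C.bz e0 2 = false := by
  have : ((2 : ℕ) : ZMod (C.nO e0)) = (2 : ZMod (C.nO e0)) := by push_cast; ring
  rw [← this, C.bz_cast]
  simp

/-- The vertex between the `k`-th and `(k+1)`-st cycle edges. -/
def vx (k : ZMod (C.nO e0)) : A ⊕ B := C.evC (C.sc e0 k).1 (C.bz e0 k)

lemma vx_succ_edge (k : ZMod (C.nO e0)) :
    C.evC (C.sc e0 (k + 1)).1 (C.bz e0 k) = C.vx e0 k := by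
  rw [C.sc_succ]
  exact C.other_ev (C.sc e0 k) (C.bz e0 k)

lemma bz_of_vx_eq {k k' : ZMod (C.nO e0)} (h : C.vx e0 k = C.vx e0 k') :
    C.bz e0 k = C.bz e0 k' := ev_side h

lemma vx_inj {k k' : ZMod (C.nO e0)} (h : C.vx e0 k = C.vx e0 k') : k = k' := by
  have hb : C.bz e0 k = C.bz e0 k' := ev_side h
  by_cases he : C.sc e0 k = C.sc e0 k'
  · exact C.sc_inj e0 he
  · -- sc k' is the other edge at the vertex
    have h2 : C.sc e0 k' = C.other (C.sc e0 k) (C.bz e0 k) := by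
      apply C.other_unique (fun hc => he hc.symm)
      calc C.evC (C.sc e0 k').1 (C.bz e0 k) = C.vx e0 k' := by rw [hb]; rfl
        _ = C.vx e0 k := h.symm
    rw [← C.sc_succ] at h2
    have hk : k' = k + 1 := C.sc_inj e0 h2
    rw [hk, C.bz_succ] at hb
    simp at hb

/-- The matching edge at the vertex `vx k`. -/
def mAt (k : ZMod (C.nO e0)) : E := C.mAtE (C.sc e0 k).1 (C.bz e0 k)

lemma mAt_mem (k : ZMod (C.nO e0)) : C.mAt e0 k ∈ C.M := C.mAtE_mem _ _

lemma mAt_ev (k : ZMod (C.nO e0)) : C.evC (C.mAt e0 k) (C.bz e0 k) = C.vx e0 k :=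
  C.mAtE_ev _ _

lemma mAt_unique {m : E} {k : ZMod (C.nO e0)} (hm : m ∈ C.M)
    (hev : C.evC m (C.bz e0 k) = C.vx e0 k) : m = C.mAt e0 k :=
  C.mAtE_unique hm hev

lemma mAt_inj_side {k k' : ZMod (C.nO e0)} (hb : C.bz e0 k = C.bz e0 k')
    (hm : C.mAt e0 k = C.mAt e0 k') : k = k' := by
  apply C.vx_inj e0 (k := k) (k' := k')
  rw [← C.mAt_ev e0 k, ← C.mAt_ev e0 k', hm, hb]

lemma vwC_false (e : E) : C.vwC e false = 1 := rfl
lemma vwC_true (e : E) : C.vwC e true = C.r e := rfl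

/-- All non-matching edges at both endpoints of `m` lie in `S`. -/
def pairIn (S : Finset C.R) (m : E) : Prop :=
  ∀ (b : Bool) (x : C.R), C.evC x.1 b = C.evC m b → x ∈ S

def InvP (S : Finset C.R) (f : E → Fin 4) : Prop :=
  (∀ x ∈ S, ∀ b, C.other x b ∈ S) ∧
  (∀ x ∈ S, ∀ b : Bool, C.vwC x.1 b (f x.1) ≠ C.vwC (C.other x b).1 b (f (C.other x b).1)) ∧
  (∀ m ∈ C.M, C.pairIn S m → ∀ (b : Bool) (x : C.R), C.evC x.1 b = C.evC m b →
    C.vwC m b (f m) ≠ C.vwC x.1 b (f x.1))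

lemma exists_R_at (ee : E) (b : Bool) : ∃ x : C.R, C.evC x.1 b = C.evC ee b := by
  have h2 := C.rcount ee b
  have hpos : 0 < (Finset.univ.filter fun z => z ∉ C.M ∧ C.evC z b = C.evC ee b).card := by omega
  obtain ⟨z, hz⟩ := Finset.card_pos.mp hpos
  simp only [Finset.mem_filter, Finset.mem_univ, true_and] at hz
  exact ⟨⟨z, hz.1⟩, hz.2⟩

lemma M_unique_at {m m' : E} {b : Bool} (hm : m ∈ C.M) (hm' : m' ∈ C.M)
    (h : C.evC m b = C.evC m' b) : m = m' := by
  have h1 : m = C.mAtE m' b := C.mAtE_unique hm h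
  have h2 : m' = C.mAtE m' b := C.mAtE_unique hm' rfl
  rw [h1]; exact h2.symm

lemma proper_of_inv {f : E → Fin 4} (h : C.InvP Finset.univ f) : C.Proper f := by
  obtain ⟨h1, h2, h3⟩ := h
  intro e g b hne hev
  by_cases heM : e ∈ C.M <;> by_cases hgM : g ∈ C.M
  · exact absurd (C.M_unique_at heM hgM hev) hne
  · exact h3 e heM (fun _ _ _ => Finset.mem_univ _) b ⟨g, hgM⟩ hev.symm
  · exact (h3 g hgM (fun _ _ _ => Finset.mem_univ _) b ⟨e, heM⟩ hev).symm
  · have hx : (⟨g, hgM⟩ : C.R) = C.other ⟨e, heM⟩ b := by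
      apply C.other_unique
      · intro hc; exact hne (congrArg Subtype.val hc).symm
      · exact hev.symm
    have := h2 ⟨e, heM⟩ (Finset.mem_univ _) b
    rw [← hx] at this
    exact this

/-- The orbit of `e0` as a finset. -/
def orb : Finset C.R := Finset.univ.image (C.sc e0)

lemma mem_orb {x : C.R} : x ∈ C.orb e0 ↔ ∃ k, C.sc e0 k = x := by
  simp [orb]

lemma orb_disjoint {S : Finset C.R} (hInv1 : ∀ x ∈ S, ∀ b, C.other x b ∈ S)
    (he0 : e0 ∉ S) : ∀ k, C.sc e0 k ∉ S := by
  have hN : ∀ i : ℕ, C.sE e0 i ∉ S := by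
    intro i
    induction i with
    | zero => exact he0
    | succ i ih =>
      intro hc
      apply ih
      have := hInv1 _ hc (C.sB e0 i)
      rw [C.sE_succ, C.other_other] at this
      exact this
  intro k; exact hN k.val

/-- Colours forbidden for a matching edge by the already-coloured edges of `S`. -/
def Zex (S : Finset C.R) (f : E → Fin 4) (m : E) : Finset (Fin 4) :=
  (Finset.univ : Finset Bool).biUnion fun b =>
    (Finset.univ.filter fun x : C.R => x ∈ S ∧ C.evC x.1 b = C.evC m b).image
      fun x => (C.vwC m b).symm (C.vwC x.1 b (f x.1))

lemma notin_Zex {S : Finset C.R} {f : E → Fin 4} {m : E} {c : Fin 4}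
    (hc : c ∉ C.Zex S f m) {b : Bool} {x : C.R} (hx : x ∈ S)
    (hev : C.evC x.1 b = C.evC m b) : C.vwC m b c ≠ C.vwC x.1 b (f x.1) := by
  intro hcon
  apply hc
  apply Finset.mem_biUnion.mpr
  refine ⟨b, Finset.mem_univ _, Finset.mem_image.mpr ⟨x, ?_, ?_⟩⟩
  · exact Finset.mem_filter.mpr ⟨Finset.mem_univ _, hx, hev⟩
  · rw [← hcon, Equiv.symm_apply_apply]

lemma filterR_card_le (b : Bool) (ee : E) (t : Finset C.R)
    (ht : ∀ x ∈ t, C.evC x.1 b = C.evC ee b) : t.card ≤ 2 := by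
  rw [← C.rcount ee b]
  apply Finset.card_le_card_of_injOn (fun x => x.1)
  · intro x hx
    simp only [Finset.mem_filter, Finset.mem_univ, true_and]
    exact Finset.mem_filter.mpr ⟨Finset.mem_univ _, x.2, ht x hx⟩
  · intro x _ y _ h
    exact Subtype.ext h

lemma Zex_card_le {S : Finset C.R} {f : E → Fin 4} {m : E}
    (hInv1 : ∀ x ∈ S, ∀ b, C.other x b ∈ S) (hm : ¬ C.pairIn S m) :
    (C.Zex S f m).card ≤ 2 := by
  unfold pairIn at hm
  push_neg at hm
  obtain ⟨b0, x0, hx0ev, hx0S⟩ := hm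
  have hempty : (Finset.univ.filter fun x : C.R => x ∈ S ∧ C.evC x.1 b0 = C.evC m b0) = ∅ := by
    apply Finset.eq_empty_of_forall_notMem
    intro x hx
    simp only [Finset.mem_filter, Finset.mem_univ, true_and] at hx
    by_cases hxx : x = x0
    · exact hx0S (hxx ▸ hx.1)
    · have : x0 = C.other x b0 := by
        apply C.other_unique (fun hc => hxx hc.symm)
        rw [hx0ev, hx.2]
      exact hx0S (this ▸ hInv1 x hx.1 b0)
  calc (C.Zex S f m).card
      ≤ ∑ b : Bool, ((Finset.univ.filter fun x : C.R =>
          x ∈ S ∧ C.evC x.1 b = C.evC m b).image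
            fun x => (C.vwC m b).symm (C.vwC x.1 b (f x.1))).card :=
        Finset.card_biUnion_le
    _ ≤ 2 := by
        rw [Fintype.sum_bool]
        have hb : ∀ b : Bool, b ≠ b0 → ((Finset.univ.filter fun x : C.R =>
            x ∈ S ∧ C.evC x.1 b = C.evC m b).image
              fun x => (C.vwC m b).symm (C.vwC x.1 b (f x.1))).card ≤ 2 := by
          intro b _
          calc _ ≤ (Finset.univ.filter fun x : C.R =>
              x ∈ S ∧ C.evC x.1 b = C.evC m b).card := Finset.card_image_le
            _ ≤ 2 := C.filterR_card_le b m _ (by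
                intro x hx
                simp only [Finset.mem_filter, Finset.mem_univ, true_and] at hx
                exact hx.2)
        have hb0 : ((Finset.univ.filter fun x : C.R =>
            x ∈ S ∧ C.evC x.1 b0 = C.evC m b0).image
              fun x => (C.vwC m b0).symm (C.vwC x.1 b0 (f x.1))).card = 0 := by
          rw [hempty]; simp
        cases b0
        · rw [hb0]; have := hb true (by simp); omega
        · rw [hb0]; have := hb false (by simp); omega

/-- Matching edges to be coloured when processing the orbit of `e0`. -/
def Dset (S : Finset C.R) : Finset E :=
  C.M.filter fun m => C.pairIn (S ∪ C.orb e0) m ∧ ¬ C.pairIn S m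

def g0 (S : Finset C.R) (f : E → Fin 4) : E → Fin 4 := fun m =>
  if m ∈ C.Dset e0 S then DPS.pick (Finset.univ \ C.Zex S f m) else f m

lemma Zex_compl_card {S : Finset C.R} {f : E → Fin 4} {m : E}
    (hInv1 : ∀ x ∈ S, ∀ b, C.other x b ∈ S) (hm : ¬ C.pairIn S m) :
    2 ≤ (Finset.univ \ C.Zex S f m).card := by
  rw [Finset.card_sdiff_of_subset (Finset.subset_univ _)]
  have h1 := C.Zex_card_le (f := f) hInv1 hm
  have h2 : (Finset.univ : Finset (Fin 4)).card = 4 := by simp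
  omega

lemma g0_spec {S : Finset C.R} {f : E → Fin 4}
    (hInv1 : ∀ x ∈ S, ∀ b, C.other x b ∈ S) :
    (∀ m, m ∉ C.Dset e0 S → C.g0 e0 S f m = f m) ∧
    (∀ m ∈ C.Dset e0 S, C.g0 e0 S f m ∉ C.Zex S f m) := by
  constructor
  · intro m hm; rw [g0, if_neg hm]
  · intro m hm
    rw [g0, if_pos hm]
    have hmD : ¬ C.pairIn S m := by
      simp only [Dset, Finset.mem_filter] at hm
      exact hm.2.2
    have := C.Zex_compl_card (f := f) hInv1 hmD
    have hne : (Finset.univ \ C.Zex S f m).Nonempty := Finset.card_pos.mp (by omega)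
    have := DPS.pick_mem hne
    exact (Finset.mem_sdiff.mp this).2

/-- Transition permutations along the cycle. -/
def pz : ZMod (C.nO e0) → Equiv.Perm (Fin 4) := fun k =>
  (C.vwC (C.sc e0 k).1 (C.bz e0 k)).trans (C.vwC (C.sc e0 (k + 1)).1 (C.bz e0 k)).symm

lemma pz_eq_iff (k : ZMod (C.nO e0)) (a b : Fin 4) :
    b = C.pz e0 k a ↔
      C.vwC (C.sc e0 (k + 1)).1 (C.bz e0 k) b = C.vwC (C.sc e0 k).1 (C.bz e0 k) a := by
  rw [pz, Equiv.trans_apply, Equiv.eq_symm_apply]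

/-- The colour excluded on edge `j` by the matching edge at vertex `k`. -/
def slotv (g : E → Fin 4) (k j : ZMod (C.nO e0)) : Fin 4 :=
  (C.vwC (C.sc e0 j).1 (C.bz e0 k)).symm (C.vwC (C.mAt e0 k) (C.bz e0 k) (g (C.mAt e0 k)))

/-- The list of available colours for cycle edge `k`. -/
def Lz (S : Finset C.R) (g : E → Fin 4) : ZMod (C.nO e0) → Finset (Fin 4) := fun k =>
  Finset.univ \
    ((if C.pairIn (S ∪ C.orb e0) (C.mAt e0 (k - 1)) then {C.slotv e0 g (k - 1) k} else ∅) ∪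
     (if C.pairIn (S ∪ C.orb e0) (C.mAt e0 k) then {C.slotv e0 g k k} else ∅))

lemma Lz_card {S : Finset C.R} {g : E → Fin 4} (k : ZMod (C.nO e0)) :
    2 ≤ (C.Lz e0 S g k).card := by
  rw [Lz, Finset.card_sdiff_of_subset (Finset.subset_univ _)]
  have h2 : (Finset.univ : Finset (Fin 4)).card = 4 := by simp
  have hc : ∀ (P : Prop) (s : Fin 4),
      (if h : P then ({s} : Finset (Fin 4)) else ∅).card ≤ 1 := by
    intro P s; split_ifs <;> simp
  have := Finset.card_union_le
    (if C.pairIn (S ∪ C.orb e0) (C.mAt e0 (k - 1)) then ({C.slotv e0 g (k - 1) k} : Finset (Fin 4)) else ∅)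
    (if C.pairIn (S ∪ C.orb e0) (C.mAt e0 k) then ({C.slotv e0 g k k} : Finset (Fin 4)) else ∅)
  have ha : (if C.pairIn (S ∪ C.orb e0) (C.mAt e0 (k - 1)) then ({C.slotv e0 g (k - 1) k} : Finset (Fin 4)) else ∅).card ≤ 1 := by
    split_ifs <;> simp
  have hb : (if C.pairIn (S ∪ C.orb e0) (C.mAt e0 k) then ({C.slotv e0 g k k} : Finset (Fin 4)) else ∅).card ≤ 1 := by
    split_ifs <;> simp
  omega

lemma mem_Lz_iff {S : Finset C.R} {g : E → Fin 4} {k : ZMod (C.nO e0)} {c : Fin 4} :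
    c ∈ C.Lz e0 S g k ↔
      (C.pairIn (S ∪ C.orb e0) (C.mAt e0 (k - 1)) → c ≠ C.slotv e0 g (k - 1) k) ∧
      (C.pairIn (S ∪ C.orb e0) (C.mAt e0 k) → c ≠ C.slotv e0 g k k) := by
  rw [Lz, Finset.mem_sdiff]
  simp only [Finset.mem_univ, true_and, Finset.mem_union]
  constructor
  · intro h
    constructor
    · intro hp hc; apply h; left; rw [if_pos hp]; simp [hc]
    · intro hp hc; apply h; right; rw [if_pos hp]; simp [hc]
  · rintro ⟨h1, h2⟩ (hc | hc)
    · by_cases hp : C.pairIn (S ∪ C.orb e0) (C.mAt e0 (k - 1))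
      · rw [if_pos hp] at hc; exact h1 hp (Finset.mem_singleton.mp hc)
      · rw [if_neg hp] at hc; exact absurd hc (Finset.notMem_empty _)
    · by_cases hp : C.pairIn (S ∪ C.orb e0) (C.mAt e0 k)
      · rw [if_pos hp] at hc; exact h2 hp (Finset.mem_singleton.mp hc)
      · rw [if_neg hp] at hc; exact absurd hc (Finset.notMem_empty _)

lemma Lz_congr {S : Finset C.R} {g g' : E → Fin 4} {k : ZMod (C.nO e0)}
    (h1 : g (C.mAt e0 (k - 1)) = g' (C.mAt e0 (k - 1)))
    (h2 : g (C.mAt e0 k) = g' (C.mAt e0 k)) :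
    C.Lz e0 S g k = C.Lz e0 S g' k := by
  unfold Lz slotv
  rw [h1, h2]

lemma static_of_card2 {S : Finset C.R} {g : E → Fin 4} {k : ZMod (C.nO e0)}
    (h : (C.Lz e0 S g k).card = 2) :
    C.pairIn (S ∪ C.orb e0) (C.mAt e0 (k - 1)) ∧ C.pairIn (S ∪ C.orb e0) (C.mAt e0 k) ∧
      C.slotv e0 g (k - 1) k ≠ C.slotv e0 g k k := by
  rw [Lz, Finset.card_sdiff_of_subset (Finset.subset_univ _)] at h
  have h2 : (Finset.univ : Finset (Fin 4)).card = 4 := by simp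
  rw [h2] at h
  by_cases hp1 : C.pairIn (S ∪ C.orb e0) (C.mAt e0 (k - 1)) <;>
    by_cases hp2 : C.pairIn (S ∪ C.orb e0) (C.mAt e0 k)
  · refine ⟨hp1, hp2, ?_⟩
    intro hc
    rw [if_pos hp1, if_pos hp2, hc, Finset.union_self] at h
    simp at h
  · rw [if_pos hp1, if_neg hp2, Finset.union_empty] at h; simp at h
  · rw [if_neg hp1, if_pos hp2, Finset.empty_union] at h; simp at h
  · rw [if_neg hp1, if_neg hp2, Finset.union_empty] at h; simp at h

end Ctx
namespace DPS2

/-- Structure of an unsatisfiable 2-cycle: the composed map swaps the 2-element list. -/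
lemma two_unsat (p0 p1 : Equiv.Perm (Fin 4)) (L0 L1 : Finset (Fin 4))
    (h0 : L0.card = 2) (h1 : 2 ≤ L1.card)
    (hsat : ¬ ∃ w0 w1, w0 ∈ L0 ∧ w1 ∈ L1 ∧ w1 ≠ p0 w0 ∧ w0 ≠ p1 w1) :
    ∀ u ∈ L0, p1 (p0 u) ∈ L0 ∧ p1 (p0 u) ≠ u := by
  push_neg at hsat
  have key : ∀ u ∈ L0, L1 = {p0 u, p1.symm u} ∧ p0 u ≠ p1.symm u := by
    intro u hu
    have hsub : L1 ⊆ {p0 u, p1.symm u} := by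
      intro w1 hw1
      by_cases h : w1 = p0 u
      · simp [h]
      · have he := hsat u w1 hu hw1 h
        have : w1 = p1.symm u := by rw [he, Equiv.symm_apply_apply]
        simp [this]
    have hc2 : ({p0 u, p1.symm u} : Finset (Fin 4)).card ≤ 2 := Finset.card_insert_le _ _ |>.trans (by simp)
    have heq : L1 = {p0 u, p1.symm u} :=
      Finset.eq_of_subset_of_card_le hsub (le_trans hc2 h1)
    refine ⟨heq, ?_⟩
    intro hcon
    rw [heq, hcon] at h1
    simp at h1
  obtain ⟨u, v, huv, hL0⟩ := Finset.card_eq_two.mp h0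
  have hu : u ∈ L0 := by rw [hL0]; simp
  have hv : v ∈ L0 := by rw [hL0]; simp
  obtain ⟨hequ, hneu⟩ := key u hu
  obtain ⟨heqv, hnev⟩ := key v hv
  have hswap : p1 (p0 u) = v ∧ p1 (p0 v) = u := by
    have h2 : p0 u ∈ ({p0 v, p1.symm v} : Finset (Fin 4)) := by
      rw [← heqv, hequ]; simp
    simp only [Finset.mem_insert, Finset.mem_singleton] at h2
    rcases h2 with h2 | h2
    · exact absurd (p0.injective h2) huv
    · constructor
      · rw [h2, Equiv.apply_symm_apply]
      · have h3 : p0 v ∈ ({p0 u, p1.symm u} : Finset (Fin 4)) := by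
          rw [← hequ, heqv]; simp
        simp only [Finset.mem_insert, Finset.mem_singleton] at h3
        rcases h3 with h3 | h3
        · exact absurd (p0.injective h3) huv.symm
        · rw [h3, Equiv.apply_symm_apply]
  intro w hw
  rw [hL0] at hw
  simp only [Finset.mem_insert, Finset.mem_singleton] at hw
  rcases hw with rfl | rfl
  · rw [hswap.1]; exact ⟨hv, Ne.symm huv⟩
  · rw [hswap.2]; exact ⟨hu, huv⟩

end DPS2

namespace Ctx
variable {A B E : Type} [Fintype E] [DecidableEq A] [DecidableEq B] (C : Ctx A B E) (e0 : C.R)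

lemma slotv_ne {g g' : E → Fin 4} {k j : ZMod (C.nO e0)}
    (h : g (C.mAt e0 k) ≠ g' (C.mAt e0 k)) : C.slotv e0 g k j ≠ C.slotv e0 g' k j := by
  unfold slotv
  intro hc
  exact h ((C.vwC (C.mAt e0 k) (C.bz e0 k)).injective
    ((C.vwC (C.sc e0 j).1 (C.bz e0 k)).symm.injective hc))

lemma slotv_congr {g g' : E → Fin 4} {k j : ZMod (C.nO e0)}
    (h : g (C.mAt e0 k) = g' (C.mAt e0 k)) : C.slotv e0 g k j = C.slotv e0 g' k j := by
  unfold slotv; rw [h]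

lemma not_pairIn_S {S : Finset C.R}
    (hI1 : ∀ x ∈ S, ∀ b, C.other x b ∈ S) (he0 : e0 ∉ S) (k : ZMod (C.nO e0)) :
    ¬ C.pairIn S (C.mAt e0 k) := by
  intro hp
  exact C.orb_disjoint e0 hI1 he0 k (hp (C.bz e0 k) (C.sc e0 k) (C.mAt_ev e0 k).symm)

lemma mAt_mem_Dset {S : Finset C.R}
    (hI1 : ∀ x ∈ S, ∀ b, C.other x b ∈ S) (he0 : e0 ∉ S) {k : ZMod (C.nO e0)}
    (hst : C.pairIn (S ∪ C.orb e0) (C.mAt e0 k)) : C.mAt e0 k ∈ C.Dset e0 S := by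
  rw [Dset, Finset.mem_filter]
  exact ⟨C.mAt_mem e0 k, hst, C.not_pairIn_S e0 hI1 he0 k⟩

/-- The flip argument for cycles of length at least 4: contradiction from
"no valid configuration has slack". -/
theorem flip_contra {S : Finset C.R} {f : E → Fin 4}
    (hI1 : ∀ x ∈ S, ∀ b, C.other x b ∈ S) (he0 : e0 ∉ S)
    (hn4 : 4 ≤ C.nO e0)
    (hns : ∀ g : E → Fin 4, (∀ m, m ∉ C.Dset e0 S → g m = f m) →
      (∀ m ∈ C.Dset e0 S, g m ∉ C.Zex S f m) →
      ¬ ∃ (k0 : ZMod (C.nO e0)) (w0 : Fin 4), w0 ∈ C.Lz e0 S g k0 ∧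
        2 ≤ ((C.Lz e0 S g (k0 + 1)).erase (C.pz e0 k0 w0)).card) : False := by
  have hLcard : ∀ (g : E → Fin 4) (k : ZMod (C.nO e0)), 2 ≤ (C.Lz e0 S g k).card :=
    fun g k => C.Lz_card e0 k
  have haligned : ∀ g : E → Fin 4, (∀ m, m ∉ C.Dset e0 S → g m = f m) →
      (∀ m ∈ C.Dset e0 S, g m ∉ C.Zex S f m) →
      ∀ k, (C.Lz e0 S g k).card = 2 ∧
        ∀ w ∈ C.Lz e0 S g k, C.pz e0 k w ∈ C.Lz e0 S g (k + 1) :=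
    fun g hA hB => DPS.aligned_of_no_slack _ _ (hLcard g) (hns g hA hB)
  obtain ⟨hg0A, hg0B⟩ := C.g0_spec e0 (S := S) (f := f) hI1
  have hal0 := haligned _ hg0A hg0B
  have hstatic : ∀ k, C.pairIn (S ∪ C.orb e0) (C.mAt e0 k) := by
    intro k
    have h2 := C.static_of_card2 e0 (hal0 (k + 1)).1
    have : (k + 1) - 1 = k := by ring
    rw [this] at h2
    exact h2.1
  have hmD : ∀ k, C.mAt e0 k ∈ C.Dset e0 S :=
    fun k => C.mAt_mem_Dset e0 hI1 he0 (hstatic k)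
  -- ZMod facts
  have h20 : (2 : ZMod (C.nO e0)) ≠ 0 := by
    intro h
    have h2 : ((2 : ℕ) : ZMod (C.nO e0)) = 0 := by push_cast; exact h
    have := (ZMod.natCast_eq_zero_iff 2 (C.nO e0)).mp h2
    have := Nat.le_of_dvd (by omega) this
    omega
  set m0 : E := C.mAt e0 0 with hm0
  -- index facts
  have hmAt2 : C.mAt e0 2 ≠ m0 := by
    intro h
    have hb : C.bz e0 2 = C.bz e0 0 := by rw [C.bz_twoZ, C.bz_zeroZ]
    have := C.mAt_inj_side e0 hb h
    exact h20 this
  by_cases h1 : C.mAt e0 1 = m0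
  case neg =>
    -- generic flip at vertex 0, slack at position 1
    set c' := DPS.pick ((Finset.univ \ C.Zex S f m0).erase (C.g0 e0 S f m0)) with hc'
    have hc'mem : c' ∈ (Finset.univ \ C.Zex S f m0).erase (C.g0 e0 S f m0) := by
      apply DPS.pick_mem
      rw [← Finset.card_pos]
      have h2 := C.Zex_compl_card (S := S) (f := f) (m := m0) hI1
        (by rw [hm0]; exact C.not_pairIn_S e0 hI1 he0 0)
      have h3 := Finset.pred_card_le_card_erase
        (s := Finset.univ \ C.Zex S f m0) (a := C.g0 e0 S f m0)
      omega
    set g' := Function.update (C.g0 e0 S f) m0 c' with hg'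
    have hg'A : ∀ m, m ∉ C.Dset e0 S → g' m = f m := by
      intro m hm
      rw [hg', Function.update_of_ne (fun hc => hm (by rw [hc, hm0]; exact hmD 0)), hg0A m hm]
    have hg'B : ∀ m ∈ C.Dset e0 S, g' m ∉ C.Zex S f m := by
      intro m hm
      by_cases hmm : m = m0
      · subst hmm
        rw [hg', Function.update_self]
        exact (Finset.mem_sdiff.mp (Finset.mem_of_mem_erase hc'mem)).2
      · rw [hg', Function.update_of_ne hmm]
        exact hg0B m hm
    have hg'm0 : g' m0 = c' := by rw [hg', Function.update_self]
    have hc'ne : c' ≠ C.g0 e0 S f m0 := Finset.ne_of_mem_erase hc'mem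
    -- lists unchanged at position 2
    have hL2 : C.Lz e0 S g' 2 = C.Lz e0 S (C.g0 e0 S f) 2 := by
      apply C.Lz_congr e0 <;> rw [hg']
      · rw [Function.update_of_ne (by rw [show (2 : ZMod (C.nO e0)) - 1 = 1 by ring]; exact h1)]
      · rw [Function.update_of_ne hmAt2]
    -- slot at vertex 1 on edge 1 unchanged
    have hslot11 : C.slotv e0 g' 1 1 = C.slotv e0 (C.g0 e0 S f) 1 1 :=
      (C.slotv_congr e0 (by rw [hg', Function.update_of_ne h1])).symm
    have hslot01ne : C.slotv e0 g' 0 1 ≠ C.slotv e0 (C.g0 e0 S f) 0 1 :=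
      C.slotv_ne e0 (by rw [hg'm0]; exact hc'ne)
    by_cases h3 : 3 ≤ (C.Lz e0 S g' 1).card
    · -- direct slack at position 0
      apply hns g' hg'A hg'B
      have hne : (C.Lz e0 S g' 0).Nonempty := Finset.card_pos.mp (by have := hLcard g' 0; omega)
      refine ⟨0, DPS.pick (C.Lz e0 S g' 0), DPS.pick_mem hne, ?_⟩
      rw [zero_add]
      have := Finset.pred_card_le_card_erase
        (s := C.Lz e0 S g' 1) (a := C.pz e0 0 (DPS.pick (C.Lz e0 S g' 0)))
      omega
    · -- the old slot value provides slack at position 1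
      have hcard1 : (C.Lz e0 S g' 1).card = 2 := by
        have := hLcard g' 1; omega
      set ws := C.slotv e0 (C.g0 e0 S f) 0 1 with hw
      have hold := C.static_of_card2 e0 (hal0 1).1
      rw [show (1 : ZMod (C.nO e0)) - 1 = 0 by ring] at hold
      have hwmem : ws ∈ C.Lz e0 S g' 1 := by
        rw [C.mem_Lz_iff]
        rw [show (1 : ZMod (C.nO e0)) - 1 = 0 by ring]
        exact ⟨fun _ => Ne.symm hslot01ne,
          fun _ => by rw [hslot11]; exact hold.2.2⟩
      have hwnot : ws ∉ C.Lz e0 S (C.g0 e0 S f) 1 := by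
        rw [C.mem_Lz_iff]
        rw [show (1 : ZMod (C.nO e0)) - 1 = 0 by ring]
        intro hcon
        exact hcon.1 hold.1 rfl
      have hpznot : C.pz e0 1 ws ∉ C.Lz e0 S (C.g0 e0 S f) 2 := by
        intro hc
        have him := DPS.aligned_image (C.pz e0) (C.Lz e0 S (C.g0 e0 S f))
          (fun k => (hal0 k).1) (fun k => (hal0 k).2) 1
        rw [show (1 : ZMod (C.nO e0)) + 1 = 2 by ring] at him
        rw [← him] at hc
        obtain ⟨u, hu, huw⟩ := Finset.mem_image.mp hc
        rw [(C.pz e0 1).injective huw] at hu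
        exact hwnot hu
      apply hns g' hg'A hg'B
      refine ⟨1, ws, hwmem, ?_⟩
      rw [show (1 : ZMod (C.nO e0)) + 1 = 2 by ring, hL2,
        Finset.erase_eq_of_notMem hpznot]
      exact le_of_eq (hal0 2).1.symm
  case pos =>
    -- adjacent chord: flip at vertex 0, slack at position -1
    have hmAtm1 : C.mAt e0 (-1) ≠ m0 := by
      intro h
      have hb : C.bz e0 (-1) = C.bz e0 1 := by rw [C.bz_neg_oneZ, C.bz_oneZ]
      have h2 := C.mAt_inj_side e0 hb (h.trans h1.symm)
      exact h20 (by linear_combination -h2)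
    have hmAtm2 : C.mAt e0 (-2) ≠ m0 := by
      intro h
      have hb : C.bz e0 (-2) = C.bz e0 0 := by rw [C.bz_neg_twoZ, C.bz_zeroZ]
      have h2 := C.mAt_inj_side e0 hb h
      rw [neg_eq_zero] at h2
      exact h20 h2
    set c' := DPS.pick ((Finset.univ \ C.Zex S f m0).erase (C.g0 e0 S f m0)) with hc'
    have hc'mem : c' ∈ (Finset.univ \ C.Zex S f m0).erase (C.g0 e0 S f m0) := by
      apply DPS.pick_mem
      rw [← Finset.card_pos]
      have h2 := C.Zex_compl_card (S := S) (f := f) (m := m0) hI1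
        (by rw [hm0]; exact C.not_pairIn_S e0 hI1 he0 0)
      have h3 := Finset.pred_card_le_card_erase
        (s := Finset.univ \ C.Zex S f m0) (a := C.g0 e0 S f m0)
      omega
    set g' := Function.update (C.g0 e0 S f) m0 c' with hg'
    have hg'A : ∀ m, m ∉ C.Dset e0 S → g' m = f m := by
      intro m hm
      rw [hg', Function.update_of_ne (fun hc => hm (by rw [hc, hm0]; exact hmD 0)), hg0A m hm]
    have hg'B : ∀ m ∈ C.Dset e0 S, g' m ∉ C.Zex S f m := by
      intro m hm
      by_cases hmm : m = m0
      · subst hmm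
        rw [hg', Function.update_self]
        exact (Finset.mem_sdiff.mp (Finset.mem_of_mem_erase hc'mem)).2
      · rw [hg', Function.update_of_ne hmm]
        exact hg0B m hm
    have hg'm0 : g' m0 = c' := by rw [hg', Function.update_self]
    have hc'ne : c' ≠ C.g0 e0 S f m0 := Finset.ne_of_mem_erase hc'mem
    have hLm1 : C.Lz e0 S g' (-1) = C.Lz e0 S (C.g0 e0 S f) (-1) := by
      apply C.Lz_congr e0 <;> rw [hg']
      · rw [Function.update_of_ne (by rw [show (-1 : ZMod (C.nO e0)) - 1 = -2 by ring]; exact hmAtm2)]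
      · rw [Function.update_of_ne hmAtm1]
    have hslotm10 : C.slotv e0 g' (-1) 0 = C.slotv e0 (C.g0 e0 S f) (-1) 0 :=
      (C.slotv_congr e0 (by rw [hg', Function.update_of_ne hmAtm1])).symm
    have hslot00ne : C.slotv e0 g' 0 0 ≠ C.slotv e0 (C.g0 e0 S f) 0 0 :=
      C.slotv_ne e0 (by rw [hg'm0]; exact hc'ne)
    by_cases h3 : 3 ≤ (C.Lz e0 S g' 0).card
    · apply hns g' hg'A hg'B
      have hne : (C.Lz e0 S g' (-1)).Nonempty := Finset.card_pos.mp (by have := hLcard g' (-1); omega)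
      refine ⟨-1, DPS.pick (C.Lz e0 S g' (-1)), DPS.pick_mem hne, ?_⟩
      rw [show (-1 : ZMod (C.nO e0)) + 1 = 0 by ring]
      have := Finset.pred_card_le_card_erase
        (s := C.Lz e0 S g' 0) (a := C.pz e0 (-1) (DPS.pick (C.Lz e0 S g' (-1))))
      omega
    · have hcard0 : (C.Lz e0 S g' 0).card = 2 := by
        have := hLcard g' 0; omega
      set vs := C.slotv e0 g' 0 0 with hv
      have holdnew := C.static_of_card2 e0 hcard0
      rw [show (0 : ZMod (C.nO e0)) - 1 = -1 by ring] at holdnew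
      have hold := C.static_of_card2 e0 (hal0 0).1
      rw [show (0 : ZMod (C.nO e0)) - 1 = -1 by ring] at hold
      have hvmem : vs ∈ C.Lz e0 S (C.g0 e0 S f) 0 := by
        rw [C.mem_Lz_iff]
        rw [show (0 : ZMod (C.nO e0)) - 1 = -1 by ring]
        constructor
        · intro _ hc
          rw [← hslotm10] at hc
          exact holdnew.2.2 hc.symm
        · intro _ hc
          exact hslot00ne hc
      have hvnot : vs ∉ C.Lz e0 S g' 0 := by
        rw [C.mem_Lz_iff]
        intro hcon
        exact hcon.2 (hstatic 0) rfl
      -- aligned image at -1 gives a preimage of vs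
      have him := DPS.aligned_image (C.pz e0) (C.Lz e0 S (C.g0 e0 S f))
        (fun k => (hal0 k).1) (fun k => (hal0 k).2) (-1)
      rw [show (-1 : ZMod (C.nO e0)) + 1 = 0 by ring] at him
      have hvim : vs ∈ (C.Lz e0 S (C.g0 e0 S f) (-1)).image (C.pz e0 (-1)) := by
        rw [him]; exact hvmem
      obtain ⟨w0, hw0mem, hw0⟩ := Finset.mem_image.mp hvim
      apply hns g' hg'A hg'B
      refine ⟨-1, w0, by rw [hLm1]; exact hw0mem, ?_⟩
      rw [show (-1 : ZMod (C.nO e0)) + 1 = 0 by ring, hw0,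
        Finset.erase_eq_of_notMem hvnot]
      omega

end Ctx

namespace Ctx
variable {A B E : Type} [Fintype E] [DecidableEq A] [DecidableEq B] (C : Ctx A B E) (e0 : C.R)

/-- The length-2 cycle case: contradiction from "no valid configuration is satisfiable". -/
theorem two_contra {S : Finset C.R} {f : E → Fin 4}
    (hI1 : ∀ x ∈ S, ∀ b, C.other x b ∈ S) (he0 : e0 ∉ S)
    (hn2' : C.nO e0 = 2)
    (hnosat : ∀ g : E → Fin 4, (∀ m, m ∉ C.Dset e0 S → g m = f m) →
      (∀ m ∈ C.Dset e0 S, g m ∉ C.Zex S f m) →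
      ¬ DPS.CycSat (C.pz e0) (C.Lz e0 S g)) : False := by
  have hn2 : 2 ≤ C.nO e0 := by omega
  have hns : ∀ g : E → Fin 4, (∀ m, m ∉ C.Dset e0 S → g m = f m) →
      (∀ m ∈ C.Dset e0 S, g m ∉ C.Zex S f m) →
      ¬ ∃ (k0 : ZMod (C.nO e0)) (w0 : Fin 4), w0 ∈ C.Lz e0 S g k0 ∧
        2 ≤ ((C.Lz e0 S g (k0 + 1)).erase (C.pz e0 k0 w0)).card := by
    rintro g hA hB ⟨k0, w0, h1, h2⟩
    exact hnosat g hA hB (DPS.cycSat_slack hn2 _ _ (fun k => C.Lz_card e0 k) k0 w0 h1 h2)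
  have haligned : ∀ g : E → Fin 4, (∀ m, m ∉ C.Dset e0 S → g m = f m) →
      (∀ m ∈ C.Dset e0 S, g m ∉ C.Zex S f m) →
      ∀ k, (C.Lz e0 S g k).card = 2 ∧
        ∀ w ∈ C.Lz e0 S g k, C.pz e0 k w ∈ C.Lz e0 S g (k + 1) :=
    fun g hA hB => DPS.aligned_of_no_slack _ _ (fun k => C.Lz_card e0 k) (hns g hA hB)
  obtain ⟨hg0A, hg0B⟩ := C.g0_spec e0 (S := S) (f := f) hI1
  have hal0 := haligned _ hg0A hg0B
  have hstatic : ∀ k, C.pairIn (S ∪ C.orb e0) (C.mAt e0 k) := by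
    intro k
    have h2 := C.static_of_card2 e0 (hal0 (k + 1)).1
    rw [show (k + 1) - 1 = k by ring] at h2
    exact h2.1
  have hmD : ∀ k, C.mAt e0 k ∈ C.Dset e0 S :=
    fun k => C.mAt_mem_Dset e0 hI1 he0 (hstatic k)
  -- ZMod 2 arithmetic
  have h2z : (2 : ZMod (C.nO e0)) = 0 := by
    have h : ((2 : ℕ) : ZMod (C.nO e0)) = 0 :=
      (ZMod.natCast_eq_zero_iff 2 (C.nO e0)).mpr (by rw [hn2'])
    push_cast at h
    exact h
  have h10 : (1 : ZMod (C.nO e0)) ≠ 0 := by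
    intro h
    have h' : ((1 : ℕ) : ZMod (C.nO e0)) = 0 := by push_cast; exact h
    have := (ZMod.natCast_eq_zero_iff 1 (C.nO e0)).mp h'
    have := Nat.le_of_dvd (by omega) this
    omega
  have hsub01 : (0 : ZMod (C.nO e0)) - 1 = 1 := by linear_combination -h2z
  have hadd11 : (1 : ZMod (C.nO e0)) + 1 = 0 := by linear_combination h2z
  have hk01 : ∀ k : ZMod (C.nO e0), k = 0 ∨ k = 1 := by
    intro k
    have hlt := ZMod.val_lt k
    have hcast := DPS.zmod_cast_val (n := C.nO e0) k
    have : k.val = 0 ∨ k.val = 1 := by omega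
    rcases this with h | h <;> rw [h] at hcast
    · left; rw [← hcast]; simp
    · right; rw [← hcast]; simp
  -- identity transitions on the A-side
  have hpz0 : ∀ a, C.pz e0 0 a = a := by
    intro a
    show ((C.vwC (C.sc e0 0).1 (C.bz e0 0)).trans
      (C.vwC (C.sc e0 (0 + 1)).1 (C.bz e0 0)).symm) a = a
    rw [C.bz_zeroZ, C.vwC_false, C.vwC_false]
    rfl
  have hslot0 : ∀ (g : E → Fin 4) (j : ZMod (C.nO e0)),
      C.slotv e0 g 0 j = g (C.mAt e0 0) := by
    intro g j
    show (C.vwC (C.sc e0 j).1 (C.bz e0 0)).symm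
      (C.vwC (C.mAt e0 0) (C.bz e0 0) (g (C.mAt e0 0))) = _
    rw [C.bz_zeroZ, C.vwC_false, C.vwC_false]
    rfl
  -- pair-form of unsatisfiability
  have hP : ∀ g : E → Fin 4, (∀ m, m ∉ C.Dset e0 S → g m = f m) →
      (∀ m ∈ C.Dset e0 S, g m ∉ C.Zex S f m) →
      ¬ ∃ w0 w1 : Fin 4, w0 ∈ C.Lz e0 S g 0 ∧ w1 ∈ C.Lz e0 S g 1 ∧
        w1 ≠ C.pz e0 0 w0 ∧ w0 ≠ C.pz e0 1 w1 := by
    rintro g hA hB ⟨w0, w1, hm0', hm1', hc1, hc2⟩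
    apply hnosat g hA hB
    refine ⟨fun k => if k = 0 then w0 else w1, ?_⟩
    intro k
    rcases hk01 k with rfl | rfl
    · constructor
      · simpa using hm0'
      · rw [zero_add]
        simpa [h10] using hc1
    · constructor
      · simpa [h10] using hm1'
      · rw [hadd11]
        simpa [h10] using hc2
  -- list shapes
  have hL0eq : ∀ g : E → Fin 4, C.Lz e0 S g 0 =
      Finset.univ \ ({C.slotv e0 g 1 0} ∪ {g (C.mAt e0 0)}) := by
    intro g
    show Finset.univ \ _ = _
    rw [hsub01, if_pos (hstatic 1), if_pos (hstatic 0), hslot0]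
  have hL1eq : ∀ g : E → Fin 4, C.Lz e0 S g 1 =
      Finset.univ \ ({g (C.mAt e0 0)} ∪ {C.slotv e0 g 1 1}) := by
    intro g
    show Finset.univ \ _ = _
    rw [sub_self, if_pos (hstatic 0), if_pos (hstatic 1), hslot0]
  by_cases hch : C.mAt e0 1 = C.mAt e0 0
  · -- chord: three parallel edges
    have hZex : C.Zex S f (C.mAt e0 0) = ∅ := by
      apply Finset.eq_empty_of_forall_notMem
      intro c hc
      obtain ⟨b, _, hc2⟩ := Finset.mem_biUnion.mp hc
      obtain ⟨x, hx, _⟩ := Finset.mem_image.mp hc2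
      rw [Finset.mem_filter] at hx
      obtain ⟨_, hxS, hxev⟩ := hx
      cases b
      · -- x is an R-edge at the A-endpoint of m0
        have hv0 : C.vx e0 0 = C.evC (C.mAt e0 0) false := by
          rw [← C.mAt_ev e0 0, C.bz_zeroZ]
        have hev0 : C.evC x.1 (C.bz e0 0) = C.vx e0 0 := by
          rw [C.bz_zeroZ, hv0]; exact hxev
        by_cases hxsc : x = C.sc e0 0
        · exact C.orb_disjoint e0 hI1 he0 0 (hxsc ▸ hxS)
        · have : x = C.other (C.sc e0 0) (C.bz e0 0) := C.other_unique hxsc hev0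
          rw [← C.sc_succ, zero_add] at this
          exact C.orb_disjoint e0 hI1 he0 1 (this ▸ hxS)
      · have hv1 : C.vx e0 1 = C.evC (C.mAt e0 0) true := by
          rw [← hch, ← C.mAt_ev e0 1, C.bz_oneZ]
        have hev1 : C.evC x.1 (C.bz e0 1) = C.vx e0 1 := by
          rw [C.bz_oneZ, hv1]; exact hxev
        by_cases hxsc : x = C.sc e0 1
        · exact C.orb_disjoint e0 hI1 he0 1 (hxsc ▸ hxS)
        · have : x = C.other (C.sc e0 1) (C.bz e0 1) := C.other_unique hxsc hev1
          rw [← C.sc_succ, hadd11] at this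
          exact C.orb_disjoint e0 hI1 he0 0 (this ▸ hxS)
    -- a family of valid configurations
    have hgc : ∀ c : Fin 4, (∀ m, m ∉ C.Dset e0 S →
        Function.update (C.g0 e0 S f) (C.mAt e0 0) c m = f m) ∧
        (∀ m ∈ C.Dset e0 S, Function.update (C.g0 e0 S f) (C.mAt e0 0) c m ∉ C.Zex S f m) := by
      intro c
      constructor
      · intro m hm
        rw [Function.update_of_ne (fun hcc => hm (by rw [hcc]; exact hmD 0)), hg0A m hm]
      · intro m hm
        by_cases hmm : m = C.mAt e0 0
        · subst hmm
          rw [Function.update_self, hZex]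
          exact Finset.notMem_empty _
        · rw [Function.update_of_ne hmm]
          exact hg0B m hm
    -- for every colour c the slots coincide: A c = B c
    have hAB : ∀ c : Fin 4,
        C.slotv e0 (Function.update (C.g0 e0 S f) (C.mAt e0 0) c) 1 0 =
        C.slotv e0 (Function.update (C.g0 e0 S f) (C.mAt e0 0) c) 1 1 := by
      intro c
      set gc := Function.update (C.g0 e0 S f) (C.mAt e0 0) c with hgcdef
      have halc := haligned gc (hgc c).1 (hgc c).2
      have him := DPS.aligned_image (C.pz e0) (C.Lz e0 S gc)
        (fun k => (halc k).1) (fun k => (halc k).2) 0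
      rw [zero_add] at him
      have hid : (C.Lz e0 S gc 0).image (C.pz e0 0) = C.Lz e0 S gc 0 := by
        rw [Finset.image_congr (g := id) (fun a _ => hpz0 a), Finset.image_id]
      rw [hid] at him
      -- him : Lz gc 0 = Lz gc 1
      have hc0 : gc (C.mAt e0 0) = c := Function.update_self _ _ _
      have hA_notin : C.slotv e0 gc 1 0 ∉ C.Lz e0 S gc 0 := by
        rw [hL0eq]
        simp
      rw [him, hL1eq] at hA_notin
      rw [Finset.mem_sdiff, not_and, not_not] at hA_notin
      have := hA_notin (Finset.mem_univ _)
      rw [Finset.mem_union, Finset.mem_singleton, Finset.mem_singleton] at this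
      rcases this with hAc | hAB'
      · -- A c = c : then the list at 0 would have 3 elements
        exfalso
        have hcard := (halc 0).1
        rw [hL0eq, hAc, hc0, Finset.union_self] at hcard
        rw [Finset.card_sdiff_of_subset (Finset.subset_univ _)] at hcard
        simp at hcard
      · exact hAB'
    -- deduce that pz 1 is the identity
    have hpz1 : ∀ u, C.pz e0 1 u = u := by
      intro u
      have key := hAB ((C.vwC (C.mAt e0 0) (C.bz e0 1)).symm ((C.vwC (C.sc e0 1).1 (C.bz e0 1)) u))
      -- unfold the slots
      unfold slotv at key
      rw [hch] at key
      simp only [Function.update_self] at key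
      rw [Equiv.apply_symm_apply] at key
      -- key : (vw (sc 0)).symm (vw (sc 1) u) = (vw (sc 1)).symm (vw (sc 1) u)
      rw [Equiv.symm_apply_apply] at key
      show ((C.vwC (C.sc e0 1).1 (C.bz e0 1)).trans
        (C.vwC (C.sc e0 (1 + 1)).1 (C.bz e0 1)).symm) u = u
      rw [hadd11, Equiv.trans_apply, key]
    -- contradiction with the swap property
    have halc := haligned _ (hgc 0).1 (hgc 0).2
    have hswap := DPS2.two_unsat (C.pz e0 0) (C.pz e0 1) _ _
      (halc 0).1 (C.Lz_card e0 1) (hP _ (hgc 0).1 (hgc 0).2)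
    have hne : (C.Lz e0 S (Function.update (C.g0 e0 S f) (C.mAt e0 0) 0) 0).Nonempty := by
      rw [← Finset.card_pos, (halc 0).1]; omega
    obtain ⟨u, hu⟩ := hne
    have := hswap u hu
    rw [hpz0, hpz1] at this
    exact this.2 rfl
  · -- non-chord: flip the matching colour at vertex 1
    set eta' := DPS.pick ((Finset.univ \ C.Zex S f (C.mAt e0 1)).erase (C.g0 e0 S f (C.mAt e0 1)))
      with heta'
    have heta'mem : eta' ∈ (Finset.univ \ C.Zex S f (C.mAt e0 1)).erase (C.g0 e0 S f (C.mAt e0 1)) := by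
      apply DPS.pick_mem
      rw [← Finset.card_pos]
      have hcc := C.Zex_compl_card (S := S) (f := f) (m := C.mAt e0 1) hI1
        (C.not_pairIn_S e0 hI1 he0 1)
      have h3 := Finset.pred_card_le_card_erase
        (s := Finset.univ \ C.Zex S f (C.mAt e0 1)) (a := C.g0 e0 S f (C.mAt e0 1))
      omega
    set g' := Function.update (C.g0 e0 S f) (C.mAt e0 1) eta' with hg'
    have hg'A : ∀ m, m ∉ C.Dset e0 S → g' m = f m := by
      intro m hm
      rw [hg', Function.update_of_ne (fun hcc => hm (by rw [hcc]; exact hmD 1)), hg0A m hm]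
    have hg'B : ∀ m ∈ C.Dset e0 S, g' m ∉ C.Zex S f m := by
      intro m hm
      by_cases hmm : m = C.mAt e0 1
      · subst hmm
        rw [hg', Function.update_self]
        exact (Finset.mem_sdiff.mp (Finset.mem_of_mem_erase heta'mem)).2
      · rw [hg', Function.update_of_ne hmm]
        exact hg0B m hm
    have hg'm0 : g' (C.mAt e0 0) = C.g0 e0 S f (C.mAt e0 0) := by
      rw [hg', Function.update_of_ne (fun hcc => hch hcc.symm)]
    have hg'm1ne : g' (C.mAt e0 1) ≠ C.g0 e0 S f (C.mAt e0 1) := by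
      rw [hg', Function.update_self]
      exact Finset.ne_of_mem_erase heta'mem
    -- swap properties for both configurations
    have hal' := haligned g' hg'A hg'B
    have hswap0 := DPS2.two_unsat (C.pz e0 0) (C.pz e0 1) _ _
      (hal0 0).1 (C.Lz_card e0 1) (hP _ hg0A hg0B)
    have hswap1 := DPS2.two_unsat (C.pz e0 0) (C.pz e0 1) _ _
      (hal' 0).1 (C.Lz_card e0 1) (hP _ hg'A hg'B)
    -- slot values
    set A0 := C.slotv e0 (C.g0 e0 S f) 1 0 with hA0
    set A1 := C.slotv e0 g' 1 0 with hA1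
    set z0 := C.g0 e0 S f (C.mAt e0 0) with hz0
    have hA01 : A0 ≠ A1 := C.slotv_ne e0 (Ne.symm hg'm1ne)
    have hA0z : A0 ≠ z0 := by
      have h := C.static_of_card2 e0 (hal0 0).1
      rw [hsub01] at h
      have := h.2.2
      rw [hslot0] at this
      exact this
    have hA1z : A1 ≠ z0 := by
      have h := C.static_of_card2 e0 (hal' 0).1
      rw [hsub01] at h
      have := h.2.2
      rw [hslot0, hg'm0] at this
      exact this
    -- the common colour z
    have hcard3 : ({A0} ∪ {A1} ∪ {z0} : Finset (Fin 4)).card = 3 := by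
      rw [show ({A0} ∪ {A1} ∪ {z0} : Finset (Fin 4)) = insert A0 (insert A1 {z0}) by
        ext t
        simp only [Finset.mem_union, Finset.mem_singleton, Finset.mem_insert]
        tauto]
      rw [Finset.card_insert_of_notMem (by simp [hA01, hA0z]),
        Finset.card_insert_of_notMem (by simp [hA1z])]
      simp
    have hX : (Finset.univ \ ({A0} ∪ {A1} ∪ {z0}) : Finset (Fin 4)).card = 1 := by
      rw [Finset.card_sdiff_of_subset (Finset.subset_univ _), hcard3]
      simp
    obtain ⟨z, hz⟩ := Finset.card_eq_one.mp hX
    have hzmem : z ∈ Finset.univ \ ({A0} ∪ {A1} ∪ {z0}) := by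
      rw [hz]; exact Finset.mem_singleton_self z
    rw [Finset.mem_sdiff] at hzmem
    have hzA0 : z ≠ A0 := fun h => hzmem.2 (by simp [h])
    have hzA1 : z ≠ A1 := fun h => hzmem.2 (by simp [h])
    have hzz0 : z ≠ z0 := fun h => hzmem.2 (by simp [h])
    have hzL0 : z ∈ C.Lz e0 S (C.g0 e0 S f) 0 := by
      rw [hL0eq]
      rw [Finset.mem_sdiff]
      refine ⟨Finset.mem_univ _, ?_⟩
      simp only [Finset.mem_union, Finset.mem_singleton]
      rw [← hA0, ← hz0]
      tauto
    have hzL0' : z ∈ C.Lz e0 S g' 0 := by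
      rw [hL0eq]
      rw [Finset.mem_sdiff]
      refine ⟨Finset.mem_univ _, ?_⟩
      simp only [Finset.mem_union, Finset.mem_singleton]
      rw [← hA1, hg'm0]
      exact fun h => h.elim hzA1 hzz0
    have hq0 := hswap0 z hzL0
    have hq1 := hswap1 z hzL0'
    rw [hpz0] at hq0 hq1
    -- pz 1 z lies in both lists, hence equals z
    have hmem0 := hq0.1
    have hmem1 := hq1.1
    rw [hL0eq] at hmem0 hmem1
    rw [Finset.mem_sdiff] at hmem0 hmem1
    have hq : C.pz e0 1 z ∈ Finset.univ \ ({A0} ∪ {A1} ∪ {z0}) := by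
      rw [Finset.mem_sdiff]
      refine ⟨Finset.mem_univ _, ?_⟩
      intro hc
      simp only [Finset.union_assoc, Finset.mem_union, Finset.mem_singleton] at hc
      rcases hc with hc | hc | hc
      · exact hmem0.2 (by simp only [Finset.mem_union, Finset.mem_singleton]; rw [← hA0, ← hz0]; exact Or.inl hc)
      · exact hmem1.2 (by simp only [Finset.mem_union, Finset.mem_singleton]; rw [← hA1, hg'm0]; exact Or.inl hc)
      · exact hmem0.2 (by simp only [Finset.mem_union, Finset.mem_singleton]; rw [← hA0, ← hz0]; exact Or.inr hc)
    rw [hz, Finset.mem_singleton] at hq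
    exact hq0.2 hq


lemma bz_pred (k : ZMod (C.nO e0)) : C.bz e0 (k - 1) = !C.bz e0 k := by
  have h := C.bz_succ e0 (k - 1)
  rw [sub_add_cancel] at h
  rw [h, Bool.not_not]

lemma prev_other (k : ZMod (C.nO e0)) :
    C.other (C.sc e0 k) (C.bz e0 (k - 1)) = C.sc e0 (k - 1) := by
  have h := C.sc_succ e0 (k - 1)
  rw [sub_add_cancel] at h
  rw [h, C.other_other]

lemma ev_prev (k : ZMod (C.nO e0)) :
    C.evC (C.sc e0 k).1 (C.bz e0 (k - 1)) = C.vx e0 (k - 1) := by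
  have h := C.vx_succ_edge e0 (k - 1)
  rw [sub_add_cancel] at h
  exact h

lemma sc_zero : C.sc e0 0 = e0 := by
  show C.sE e0 (0 : ZMod (C.nO e0)).val = e0
  rw [ZMod.val_zero]
  exact C.sE_zero e0

lemma e0_mem_orb : e0 ∈ C.orb e0 := by
  rw [mem_orb]
  exact ⟨0, C.sc_zero e0⟩

theorem cycle_colors {S : Finset C.R} {f : E → Fin 4}
    (hInv : C.InvP S f) (he0 : e0 ∉ S) :
    ∃ g : E → Fin 4,
      (∀ m, m ∉ C.Dset e0 S → g m = f m) ∧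
      (∀ m ∈ C.Dset e0 S, g m ∉ C.Zex S f m) ∧
      DPS.CycSat (C.pz e0) (C.Lz e0 S g) := by
  obtain ⟨hI1, _, _⟩ := hInv
  by_contra hno
  have hnosat : ∀ g : E → Fin 4, (∀ m, m ∉ C.Dset e0 S → g m = f m) →
      (∀ m ∈ C.Dset e0 S, g m ∉ C.Zex S f m) →
      ¬ DPS.CycSat (C.pz e0) (C.Lz e0 S g) :=
    fun g hA hB hS => hno ⟨g, hA, hB, hS⟩
  rcases eq_or_ne (C.nO e0) 2 with h2 | h2
  · exact C.two_contra e0 hI1 he0 h2 hnosat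
  · have hn4 : 4 ≤ C.nO e0 := by
      have ha := C.nO_two_le e0
      have hb := C.nO_even e0
      omega
    apply C.flip_contra e0 hI1 he0 hn4
    rintro g hA hB ⟨k0, w0, hq1, hq2⟩
    exact hnosat g hA hB
      (DPS.cycSat_slack (C.nO_two_le e0) _ _ (fun k => C.Lz_card e0 k) k0 w0 hq1 hq2)

lemma bool_dichotomy (b c : Bool) : b = c ∨ b = !c := by
  cases b <;> cases c <;> simp

theorem step {S : Finset C.R} {f : E → Fin 4} (hInv : C.InvP S f) (he0 : e0 ∉ S) :
    ∃ f' : E → Fin 4, C.InvP (S ∪ C.orb e0) f' := by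
  obtain ⟨hI1, hI2, hI3⟩ := hInv
  obtain ⟨g, hgA, hgB, w, hw⟩ := C.cycle_colors e0 ⟨hI1, hI2, hI3⟩ he0
  have horbS : ∀ x : C.R, x ∈ C.orb e0 → x ∉ S := by
    intro x hx
    obtain ⟨k, rfl⟩ := (C.mem_orb e0).mp hx
    exact C.orb_disjoint e0 hI1 he0 k
  set f' : E → Fin 4 := fun x => if h : ∃ k, (C.sc e0 k).1 = x then w h.choose else g x
    with hf'def
  have hf'sc : ∀ k, f' (C.sc e0 k).1 = w k := by
    intro k
    have hex : ∃ k', (C.sc e0 k').1 = (C.sc e0 k).1 := ⟨k, rfl⟩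
    rw [hf'def]
    simp only
    rw [dif_pos hex]
    have hsp := hex.choose_spec
    have : hex.choose = k := C.sc_inj e0 (Subtype.ext hsp)
    rw [this]
  have hf'R : ∀ x : C.R, x ∉ C.orb e0 → f' x.1 = g x.1 := by
    intro x hx
    rw [hf'def]
    simp only
    rw [dif_neg]
    rintro ⟨k, hk⟩
    exact hx ((C.mem_orb e0).mpr ⟨k, Subtype.ext hk⟩)
  have hf'M : ∀ m ∈ C.M, f' m = g m := by
    intro m hm
    rw [hf'def]
    simp only
    rw [dif_neg]
    rintro ⟨k, hk⟩
    exact (C.sc e0 k).2 (hk ▸ hm)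
  have hgR : ∀ x : C.R, g x.1 = f x.1 := by
    intro x
    apply hgA
    intro hx
    rw [Dset, Finset.mem_filter] at hx
    exact x.2 hx.1
  have hf'S : ∀ x : C.R, x ∈ S → f' x.1 = f x.1 := by
    intro x hx
    rw [hf'R x (fun hc => horbS x hc hx), hgR]
  -- proper along the cycle
  have hcyc : ∀ k, C.vwC (C.sc e0 k).1 (C.bz e0 k) (w k) ≠
      C.vwC (C.sc e0 (k + 1)).1 (C.bz e0 k) (w (k + 1)) := by
    intro k hcon
    apply (hw k).2
    rw [C.pz_eq_iff]
    exact hcon.symm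
  refine ⟨f', ?_, ?_, ?_⟩
  · -- closure
    intro x hx b
    rcases Finset.mem_union.mp hx with hx | hx
    · exact Finset.mem_union_left _ (hI1 x hx b)
    · obtain ⟨k, rfl⟩ := (C.mem_orb e0).mp hx
      apply Finset.mem_union_right
      rcases bool_dichotomy b (C.bz e0 k) with rfl | rfl
      · rw [← C.sc_succ]
        rw [C.mem_orb]
        exact ⟨k + 1, rfl⟩
      · rw [show (!C.bz e0 k) = C.bz e0 (k - 1) from (C.bz_pred e0 k).symm]
        rw [C.prev_other, C.mem_orb]
        exact ⟨k - 1, rfl⟩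
  · -- properness among non-matching edges
    intro x hx b
    rcases Finset.mem_union.mp hx with hx | hx
    · have hoS := hI1 x hx b
      rw [hf'S x hx, hf'S _ hoS]
      exact hI2 x hx b
    · obtain ⟨k, rfl⟩ := (C.mem_orb e0).mp hx
      rcases bool_dichotomy b (C.bz e0 k) with rfl | rfl
      · rw [← C.sc_succ, hf'sc, hf'sc]
        exact hcyc k
      · rw [show (!C.bz e0 k) = C.bz e0 (k - 1) from (C.bz_pred e0 k).symm]
        rw [C.prev_other, hf'sc, hf'sc]
        intro hcon
        apply hcyc (k - 1)
        rw [sub_add_cancel]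
        exact hcon.symm
  · -- matching constraints
    intro m hm hpair b x hevx
    by_cases hmS : C.pairIn S m
    · have hxS : x ∈ S := hmS b x hevx
      have hmD : m ∉ C.Dset e0 S := by
        rw [Dset, Finset.mem_filter]
        rintro ⟨_, _, hc⟩
        exact hc hmS
      rw [hf'M m hm, hgA m hmD, hf'S x hxS]
      exact hI3 m hm hmS b x hevx
    · have hmDset : m ∈ C.Dset e0 S := by
        rw [Dset, Finset.mem_filter]
        exact ⟨hm, hpair, hmS⟩
      rw [hf'M m hm]
      rcases Finset.mem_union.mp (hpair b x hevx) with hxS | hxO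
      · rw [hf'S x hxS]
        exact C.notin_Zex (hgB m hmDset) hxS hevx
      · obtain ⟨k, rfl⟩ := (C.mem_orb e0).mp hxO
        rw [hf'sc]
        rcases bool_dichotomy b (C.bz e0 k) with rfl | rfl
        · -- m is the matching edge at vertex k
          have hmk : m = C.mAt e0 k := C.mAt_unique e0 hm hevx.symm
          have hwk := (hw k).1
          rw [C.mem_Lz_iff] at hwk
          have hstat : C.pairIn (S ∪ C.orb e0) (C.mAt e0 k) := by rw [← hmk]; exact hpair
          have hne := hwk.2 hstat
          intro hcon
          apply hne
          show w k = C.slotv e0 g k k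
          unfold slotv
          rw [Equiv.eq_symm_apply, ← hmk]
          exact hcon.symm
        · rw [show (!C.bz e0 k) = C.bz e0 (k - 1) from (C.bz_pred e0 k).symm] at hevx ⊢
          have hmk : m = C.mAt e0 (k - 1) := by
            apply C.mAt_unique e0 hm
            exact hevx.symm.trans (C.ev_prev e0 k)
          have hwk := (hw k).1
          rw [C.mem_Lz_iff] at hwk
          have hstat : C.pairIn (S ∪ C.orb e0) (C.mAt e0 (k - 1)) := by
            rw [← hmk]; exact hpair
          have hne := hwk.1 hstat
          intro hcon
          apply hne
          show w k = C.slotv e0 g (k - 1) k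
          unfold slotv
          rw [Equiv.eq_symm_apply, ← hmk]
          exact hcon.symm

theorem extend : ∀ (N : ℕ) (S : Finset C.R) (f : E → Fin 4),
    (Finset.univ \ S).card ≤ N → C.InvP S f → ∃ f', C.Proper f' := by
  intro N
  induction N with
  | zero =>
    intro S f hcard hInv
    have hS : S = Finset.univ := by
      have h0 : (Finset.univ \ S) = ∅ := Finset.card_eq_zero.mp (by omega)
      apply Finset.eq_univ_of_forall
      intro x
      by_contra hx
      have : x ∈ Finset.univ \ S := Finset.mem_sdiff.mpr ⟨Finset.mem_univ _, hx⟩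
      rw [h0] at this
      exact Finset.notMem_empty _ this
    exact ⟨f, C.proper_of_inv (hS ▸ hInv)⟩
  | succ N ih =>
    intro S f hcard hInv
    by_cases hS : S = Finset.univ
    · exact ⟨f, C.proper_of_inv (hS ▸ hInv)⟩
    · have hex : ∃ x : C.R, x ∉ S := by
        by_contra hc
        push_neg at hc
        exact hS (Finset.eq_univ_of_forall hc)
      obtain ⟨e1, he1⟩ := hex
      obtain ⟨f', hInv'⟩ := C.step e1 hInv he1
      apply ih (S ∪ C.orb e1) f' ?_ hInv'
      have hss : Finset.univ \ (S ∪ C.orb e1) ⊂ Finset.univ \ S := by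
        apply Finset.ssubset_iff_of_subset
          (Finset.sdiff_subset_sdiff (le_refl _) (Finset.subset_union_left)) |>.mpr
        refine ⟨e1, Finset.mem_sdiff.mpr ⟨Finset.mem_univ _, he1⟩, ?_⟩
        rw [Finset.mem_sdiff]
        rintro ⟨_, hc⟩
        exact hc (Finset.mem_union_right _ (C.e0_mem_orb e1))
      have := Finset.card_lt_card hss
      omega

theorem ctx_main : ∃ f : E → Fin 4, C.Proper f := by
  apply C.extend (Finset.univ \ (∅ : Finset C.R)).card ∅ (fun _ => 0) (le_refl _)
  refine ⟨?_, ?_, ?_⟩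
  · intro x hx; exact absurd hx (Finset.notMem_empty _)
  · intro x hx; exact absurd hx (Finset.notMem_empty _)
  · intro m _ hpair
    obtain ⟨x, hx⟩ := C.exists_R_at m false
    exact absurd (hpair false x hx) (Finset.notMem_empty _)

end Ctx

section BadCase
variable {A B E : Type} [Fintype E] [DecidableEq A] [DecidableEq B]

theorem bad_case (ea : E → A) (eb : E → B) (r : E → Equiv.Perm (Fin 4))
    (h3A : ∀ e : E, (Finset.univ.filter fun x => ea x = ea e).card = 3)
    (h3B : ∀ e : E, (Finset.univ.filter fun x => eb x = eb e).card = 3) :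
    ∃ f : E → Fin 4, (∀ e g : E, e ≠ g → ea e = ea g → f e ≠ f g) ∧
      (∀ e g : E, e ≠ g → eb e = eb g → r e (f e) ≠ r g (f g)) := by
  classical
  -- counting: both vertex classes have the same number of supported vertices
  have hcount : ∀ (X : Type) [DecidableEq X] (ex : E → X),
      (∀ e : E, (Finset.univ.filter fun x => ex x = ex e).card = 3) →
      Fintype.card E = 3 * (Finset.univ.image ex).card := by
    intro X _ ex h3
    have h1 : (Finset.univ : Finset E).card =
        ∑ a ∈ Finset.univ.image ex, ((Finset.univ.filter fun e => ex e = a)).card :=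
      Finset.card_eq_sum_card_fiberwise
        (fun e _ => Finset.mem_image_of_mem _ (Finset.mem_univ e))
    rw [Fintype.card, h1]
    rw [Finset.sum_congr rfl (fun a ha => ?_), Finset.sum_const, smul_eq_mul, mul_comm]
    obtain ⟨e, _, rfl⟩ := Finset.mem_image.mp ha
    exact h3 e
  have hAB : (Finset.univ.image ea).card = (Finset.univ.image eb).card := by
    have h1 := hcount A ea h3A
    have h2 := hcount B eb h3B
    omega
  -- Hall's condition
  set ι := {a : A // a ∈ Finset.univ.image ea} with hι
  set t : ι → Finset B := fun u => (Finset.univ.filter fun e => ea e = u.1).image eb with ht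
  have hHall : ∀ s : Finset ι, s.card ≤ (s.biUnion t).card := by
    intro s
    set sa := s.image Subtype.val with hsa
    have hsacard : sa.card = s.card := Finset.card_image_of_injective _ Subtype.val_injective
    set F := Finset.univ.filter (fun e : E => ea e ∈ sa) with hF
    have hF1 : F.card = 3 * s.card := by
      have h1 : F.card = ∑ a ∈ sa, (F.filter fun e => ea e = a).card :=
        Finset.card_eq_sum_card_fiberwise (fun e he => (Finset.mem_filter.mp he).2)
      rw [h1, Finset.sum_congr rfl (fun a ha => ?_), Finset.sum_const, smul_eq_mul, hsacard,
        mul_comm]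
      have hfib : F.filter (fun e => ea e = a) = Finset.univ.filter fun e => ea e = a := by
        ext x
        simp only [hF, Finset.mem_filter, Finset.mem_univ, true_and, and_iff_right_iff_imp]
        intro hx; rw [hx]; exact ha
      rw [hfib]
      obtain ⟨u, _, rfl⟩ := Finset.mem_image.mp ha
      obtain ⟨e, _, he⟩ := Finset.mem_image.mp u.2
      rw [← he]
      exact h3A e
    have hF2 : F.card ≤ 3 * (s.biUnion t).card := by
      have hsub : F ⊆ Finset.univ.filter (fun e : E => eb e ∈ s.biUnion t) := by
        intro e he
        rw [hF, Finset.mem_filter] at he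
        obtain ⟨u, hu, huv⟩ := Finset.mem_image.mp he.2
        rw [Finset.mem_filter]
        refine ⟨Finset.mem_univ _, Finset.mem_biUnion.mpr ⟨u, hu, ?_⟩⟩
        rw [ht]
        exact Finset.mem_image.mpr ⟨e, Finset.mem_filter.mpr ⟨Finset.mem_univ _, huv.symm⟩, rfl⟩
      calc F.card ≤ (Finset.univ.filter (fun e : E => eb e ∈ s.biUnion t)).card :=
            Finset.card_le_card hsub
        _ = ∑ b ∈ s.biUnion t, ((Finset.univ.filter (fun e : E => eb e ∈ s.biUnion t)).filter
            fun e => eb e = b).card :=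
            Finset.card_eq_sum_card_fiberwise (fun e he => (Finset.mem_filter.mp he).2)
        _ ≤ ∑ _b ∈ s.biUnion t, 3 := by
            apply Finset.sum_le_sum
            intro b hb
            obtain ⟨u, _, hbu⟩ := Finset.mem_biUnion.mp hb
            rw [ht] at hbu
            obtain ⟨e, _, rfl⟩ := Finset.mem_image.mp hbu
            calc _ ≤ (Finset.univ.filter fun x => eb x = eb e).card := by
                  apply Finset.card_le_card
                  intro x hx
                  rw [Finset.mem_filter] at hx ⊢
                  exact ⟨Finset.mem_univ _, hx.2⟩
              _ = 3 := h3B e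
        _ = 3 * (s.biUnion t).card := by rw [Finset.sum_const, smul_eq_mul, mul_comm]
    omega
  obtain ⟨φ, hφinj, hφmem⟩ := (Finset.all_card_le_biUnion_card_iff_exists_injective t).mp hHall
  -- pick an edge realising each matched pair
  have hmE : ∀ u : ι, ∃ e : E, ea e = u.1 ∧ eb e = φ u := by
    intro u
    have := hφmem u
    rw [ht] at this
    obtain ⟨e, he, heb⟩ := Finset.mem_image.mp this
    exact ⟨e, (Finset.mem_filter.mp he).2, heb⟩
  set mE : ι → E := fun u => (hmE u).choose with hmEdef
  have hmEa : ∀ u, ea (mE u) = u.1 := fun u => (hmE u).choose_spec.1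
  have hmEb : ∀ u, eb (mE u) = φ u := fun u => (hmE u).choose_spec.2
  set M : Finset E := Finset.univ.image mE with hM
  -- uniqueness on the A side
  have hMA : ∀ e : E, ∃! m, m ∈ M ∧ ea m = ea e := by
    intro e
    have hu : ea e ∈ Finset.univ.image ea := Finset.mem_image_of_mem _ (Finset.mem_univ e)
    refine ⟨mE ⟨ea e, hu⟩, ⟨Finset.mem_image_of_mem _ (Finset.mem_univ _), hmEa _⟩, ?_⟩
    rintro m ⟨hmM, hma⟩
    obtain ⟨u, _, rfl⟩ := Finset.mem_image.mp hmM
    have : u = ⟨ea e, hu⟩ := Subtype.ext (by rw [← hmEa u, hma])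
    rw [this]
  -- uniqueness and existence on the B side via a counting bijection
  have hψ : Function.Bijective (fun u : ι =>
      (⟨φ u, by rw [← hmEb u]; exact Finset.mem_image_of_mem _ (Finset.mem_univ _)⟩ :
        {b : B // b ∈ Finset.univ.image eb})) := by
    rw [Fintype.bijective_iff_injective_and_card]
    constructor
    · intro u v huv
      exact hφinj (congrArg Subtype.val huv)
    · rw [Fintype.card_coe, Fintype.card_coe]
      exact hAB
  have hMB : ∀ e : E, ∃! m, m ∈ M ∧ eb m = eb e := by
    intro e
    have hb : eb e ∈ Finset.univ.image eb := Finset.mem_image_of_mem _ (Finset.mem_univ e)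
    obtain ⟨u, hu⟩ := hψ.2 ⟨eb e, hb⟩
    have hbu : φ u = eb e := congrArg Subtype.val hu
    refine ⟨mE u, ⟨Finset.mem_image_of_mem _ (Finset.mem_univ _), by rw [hmEb, hbu]⟩, ?_⟩
    rintro m ⟨hmM, hmb⟩
    obtain ⟨v, _, rfl⟩ := Finset.mem_image.mp hmM
    have hφv : φ v = eb e := by rw [← hmEb v]; exact hmb
    have : φ v = φ u := by rw [hφv, hbu]
    rw [hφinj this]
  -- build the context
  set C : Ctx A B E := {
    ea := ea, eb := eb, r := r, M := M
    matched := by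
      intro e b
      cases b
      · obtain ⟨m, ⟨hm1, hm2⟩, hm3⟩ := hMA e
        refine ⟨m, ⟨hm1, by simp [ev, hm2]⟩, ?_⟩
        rintro m' ⟨hm'1, hm'2⟩
        simp only [ev, if_neg Bool.false_ne_true] at hm'2
        exact hm3 m' ⟨hm'1, Sum.inl.inj hm'2⟩
      · obtain ⟨m, ⟨hm1, hm2⟩, hm3⟩ := hMB e
        refine ⟨m, ⟨hm1, by simp [ev, hm2]⟩, ?_⟩
        rintro m' ⟨hm'1, hm'2⟩
        simp only [ev, if_pos rfl] at hm'2
        exact hm3 m' ⟨hm'1, Sum.inr.inj hm'2⟩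
    deg3 := by
      intro e b
      cases b
      · rw [← h3A e]
        congr 1
        ext x
        simp [ev]
      · rw [← h3B e]
        congr 1
        ext x
        simp [ev] } with hC
  obtain ⟨f, hf⟩ := C.ctx_main
  refine ⟨f, ?_, ?_⟩
  · intro e g hne hev
    have := hf e g false hne (by simp [Ctx.evC, hC, ev, hev])
    simpa [Ctx.vwC, hC] using this
  · intro e g hne hev
    have := hf e g true hne (by simp [Ctx.evC, hC, ev, hev])
    simpa [Ctx.vwC, hC] using this

end BadCase

section TopLevel

theorem main_induction : ∀ (N : ℕ) (A B E : Type) (_ : Fintype E) (_ : DecidableEq A)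
    (_ : DecidableEq B) (ea : E → A) (eb : E → B) (r : E → Equiv.Perm (Fin 4)),
    (∀ v : A, (Finset.univ.filter fun e => ea e = v).card ≤ 3) →
    (∀ v : B, (Finset.univ.filter fun e => eb e = v).card ≤ 3) →
    Fintype.card E ≤ N →
    ∃ f : E → Fin 4, (∀ e g : E, e ≠ g → ea e = ea g → f e ≠ f g) ∧
      (∀ e g : E, e ≠ g → eb e = eb g → r e (f e) ≠ r g (f g)) := by
  intro N
  induction N with
  | zero =>
    intro A B E _ _ _ ea eb r _ _ hcard
    have hE : IsEmpty E := Fintype.card_eq_zero_iff.mp (by omega)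
    exact ⟨fun _ => 0, fun e => (hE.elim e), fun e => (hE.elim e)⟩
  | succ N ih =>
    intro A B E _ _ _ ea eb r hA hB hcard
    by_cases hbad : ∀ e : E, (Finset.univ.filter fun x => ea x = ea e).card = 3 ∧
        (Finset.univ.filter fun x => eb x = eb e).card = 3
    · exact bad_case ea eb r (fun e => (hbad e).1) (fun e => (hbad e).2)
    · push_neg at hbad
      obtain ⟨e0, he0⟩ := hbad
      have hA0 : (Finset.univ.filter fun x => ea x = ea e0).card ≤ 3 := hA (ea e0)
      have hB0 : (Finset.univ.filter fun x => eb x = eb e0).card ≤ 3 := hB (eb e0)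
      have hsmall : (Finset.univ.filter fun x => ea x = ea e0).card ≤ 2 ∨
          (Finset.univ.filter fun x => eb x = eb e0).card ≤ 2 := by
        by_contra hc
        push_neg at hc
        obtain ⟨h1, h2⟩ := hc
        exact he0 (by omega) (by omega)
      classical
      set E' := {x : E // x ≠ e0} with hE'
      have hsub : ∀ (v : A), (Finset.univ.filter fun x : E' => ea x.1 = v).card ≤
          (Finset.univ.filter fun e : E => ea e = v).card := by
        intro v
        apply Finset.card_le_card_of_injOn (fun x => x.1)
        · intro x hx
          rw [Finset.mem_coe, Finset.mem_filter] at hx ⊢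
          exact ⟨Finset.mem_univ _, hx.2⟩
        · intro x _ y _ h; exact Subtype.ext h
      have hsubB : ∀ (v : B), (Finset.univ.filter fun x : E' => eb x.1 = v).card ≤
          (Finset.univ.filter fun e : E => eb e = v).card := by
        intro v
        apply Finset.card_le_card_of_injOn (fun x => x.1)
        · intro x hx
          rw [Finset.mem_coe, Finset.mem_filter] at hx ⊢
          exact ⟨Finset.mem_univ _, hx.2⟩
        · intro x _ y _ h; exact Subtype.ext h
      have hcard' : Fintype.card E' ≤ N := by
        have h1 : Fintype.card E' = Fintype.card E - 1 := by
          have h := Fintype.card_subtype_compl (fun x : E => x = e0)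
          rw [Fintype.card_subtype_eq] at h
          exact h
        have h2 : 1 ≤ Fintype.card E := Fintype.card_pos_iff.mpr ⟨e0⟩
        omega
      obtain ⟨f', hf'A, hf'B⟩ := ih A B E' _ _ _ (fun x => ea x.1) (fun x => eb x.1)
        (fun x => r x.1) (fun v => le_trans (hsub v) (hA v))
        (fun v => le_trans (hsubB v) (hB v)) hcard'
      -- forbidden colours for e0
      set FbA := (Finset.univ.filter fun x : E' => ea x.1 = ea e0).image (fun x => f' x)
        with hFbA
      set FbB := (Finset.univ.filter fun x : E' => eb x.1 = eb e0).image
        (fun x => (r e0).symm (r x.1 (f' x))) with hFbB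
      have hcA : (Finset.univ.filter fun x : E' => ea x.1 = ea e0).card ≤
          (Finset.univ.filter fun e : E => ea e = ea e0).card - 1 := by
        have hstep : (Finset.univ.filter fun x : E' => ea x.1 = ea e0).card ≤
            ((Finset.univ.filter fun e : E => ea e = ea e0).erase e0).card := by
          apply Finset.card_le_card_of_injOn (fun x => x.1)
          · intro x hx
            rw [Finset.mem_coe, Finset.mem_filter] at hx
            exact Finset.mem_erase.mpr ⟨x.2, Finset.mem_filter.mpr ⟨Finset.mem_univ _, hx.2⟩⟩
          · intro x _ y _ h; exact Subtype.ext h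
        have herase := Finset.card_erase_of_mem (s := Finset.univ.filter fun e : E => ea e = ea e0)
          (Finset.mem_filter.mpr ⟨Finset.mem_univ _, rfl⟩)
        omega
      have hcB : (Finset.univ.filter fun x : E' => eb x.1 = eb e0).card ≤
          (Finset.univ.filter fun e : E => eb e = eb e0).card - 1 := by
        have hstep : (Finset.univ.filter fun x : E' => eb x.1 = eb e0).card ≤
            ((Finset.univ.filter fun e : E => eb e = eb e0).erase e0).card := by
          apply Finset.card_le_card_of_injOn (fun x => x.1)
          · intro x hx
            rw [Finset.mem_coe, Finset.mem_filter] at hx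
            exact Finset.mem_erase.mpr ⟨x.2, Finset.mem_filter.mpr ⟨Finset.mem_univ _, hx.2⟩⟩
          · intro x _ y _ h; exact Subtype.ext h
        have herase := Finset.card_erase_of_mem (s := Finset.univ.filter fun e : E => eb e = eb e0)
          (Finset.mem_filter.mpr ⟨Finset.mem_univ _, rfl⟩)
        omega
      have hFbcard : (FbA ∪ FbB).card < 4 := by
        have h1 : FbA.card ≤ (Finset.univ.filter fun x : E' => ea x.1 = ea e0).card :=
          Finset.card_image_le
        have h2 : FbB.card ≤ (Finset.univ.filter fun x : E' => eb x.1 = eb e0).card :=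
          Finset.card_image_le
        have h3 := Finset.card_union_le FbA FbB
        rcases hsmall with h | h <;> omega
      obtain ⟨c, hc⟩ := DPS.exists_notMem _ hFbcard
      have hcA' : c ∉ FbA := fun h => hc (Finset.mem_union_left _ h)
      have hcB' : c ∉ FbB := fun h => hc (Finset.mem_union_right _ h)
      refine ⟨fun e => if h : e = e0 then c else f' ⟨e, h⟩, ?_, ?_⟩
      · intro e g hne hev
        dsimp only
        by_cases he : e = e0 <;> by_cases hg : g = e0
        · exact absurd (he.trans hg.symm) hne
        · subst he
          rw [dif_pos rfl, dif_neg hg]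
          intro hcon
          apply hcA'
          rw [hFbA]
          exact Finset.mem_image.mpr ⟨⟨g, hg⟩,
            Finset.mem_filter.mpr ⟨Finset.mem_univ _, hev.symm⟩, hcon.symm⟩
        · subst hg
          rw [dif_neg he, dif_pos rfl]
          intro hcon
          apply hcA'
          rw [hFbA]
          exact Finset.mem_image.mpr ⟨⟨e, he⟩,
            Finset.mem_filter.mpr ⟨Finset.mem_univ _, hev⟩, hcon⟩
        · rw [dif_neg he, dif_neg hg]
          exact hf'A ⟨e, he⟩ ⟨g, hg⟩ (fun h => hne (congrArg Subtype.val h)) hev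
      · intro e g hne hev
        dsimp only
        by_cases he : e = e0 <;> by_cases hg : g = e0
        · exact absurd (he.trans hg.symm) hne
        · subst he
          rw [dif_pos rfl, dif_neg hg]
          intro hcon
          apply hcB'
          rw [hFbB]
          refine Finset.mem_image.mpr ⟨⟨g, hg⟩,
            Finset.mem_filter.mpr ⟨Finset.mem_univ _, hev.symm⟩, ?_⟩
          rw [← hcon, Equiv.symm_apply_apply]
        · subst hg
          rw [dif_neg he, dif_pos rfl]
          intro hcon
          apply hcB'
          rw [hFbB]
          refine Finset.mem_image.mpr ⟨⟨e, he⟩,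
            Finset.mem_filter.mpr ⟨Finset.mem_univ _, hev⟩, ?_⟩
          rw [hcon, Equiv.symm_apply_apply]
        · rw [dif_neg he, dif_neg hg]
          exact hf'B ⟨e, he⟩ ⟨g, hg⟩ (fun h => hne (congrArg Subtype.val h)) hev

end TopLevel

end

/-- Every bipartite multigraph of maximum degree at most 3, whose edges carry
distortion permutations of the colour set {0,1,2,3}, admits a proper
distortion-colouring with 4 colours. The multigraph is encoded by an edge type
`E` with endpoint maps `ea : E → A`, `eb : E → B`. -/
theorem stmt_0 {A B E : Type} [Fintype E] [DecidableEq A] [DecidableEq B]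
    (ea : E → A) (eb : E → B)
    (hA : ∀ v : A, (Finset.univ.filter fun e => ea e = v).card ≤ 3)
    (hB : ∀ v : B, (Finset.univ.filter fun e => eb e = v).card ≤ 3)
    (r : E → Equiv.Perm (Fin 4)) :
    ∃ f : E → Fin 4,
      (∀ e g : E, e ≠ g → ea e = ea g → f e ≠ f g) ∧
      (∀ e g : E, e ≠ g → eb e = eb g → r e (f e) ≠ r g (f g)) := by
  exact main_induction (Fintype.card E) A B E _ _ _ ea eb r hA hB (le_refl _)
end

section
/- Every bipartite multigraph with maximum degree at most d, where each edge e is assigned an integer delay r(e), admits an edge colouring f : E → {0,1,...,d} such that f is proper on the class A and the colouring e ↦ f(e) + r(e) (mod d+1) is proper on the class B, in the special case d = 3. -/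
open scoped Classical
open scoped symmDiff
set_option linter.unusedSectionVars false

namespace DelayCol

variable {A B E : Type} [Fintype E] [DecidableEq A] [DecidableEq B]

section
variable (ea : E → A) (eb : E → B) (r : E → ℤ)

/-- A-side partners of `e` within `S`. -/
noncomputable def pA (S : Finset E) (e : E) : Finset E :=
  (S.filter fun g => ea g = ea e).erase e

noncomputable def pB (S : Finset E) (e : E) : Finset E :=
  (S.filter fun g => eb g = eb e).erase e

noncomputable def forb (f : E → ZMod 4) (S : Finset E) (e : E) : Finset (ZMod 4) :=
  (pA ea S e).image f ∪ (pB eb S e).image fun g => f g + (r g : ZMod 4) - (r e : ZMod 4)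

def ProperOn (f : E → ZMod 4) (S : Finset E) : Prop :=
  (∀ x ∈ S, ∀ y ∈ S, x ≠ y → ea x = ea y → f x ≠ f y) ∧
  (∀ x ∈ S, ∀ y ∈ S, x ≠ y → eb x = eb y → f x + (r x : ZMod 4) ≠ f y + (r y : ZMod 4))

def Rel (S : Finset E) (x y : E) : Prop :=
  x ∈ S ∧ y ∈ S ∧ x ≠ y ∧ (ea x = ea y ∨ eb x = eb y)

def Reach (S : Finset E) : E → E → Prop := Relation.ReflTransGen (Rel ea eb S)

variable {ea eb r}

lemma mem_pA {S : Finset E} {e g : E} : g ∈ pA ea S e ↔ g ∈ S ∧ g ≠ e ∧ ea g = ea e := by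
  simp [pA, Finset.mem_erase, Finset.mem_filter]; tauto

lemma mem_pB {S : Finset E} {e g : E} : g ∈ pB eb S e ↔ g ∈ S ∧ g ≠ e ∧ eb g = eb e := by
  simp [pB, Finset.mem_erase, Finset.mem_filter]; tauto

lemma pA_mono {S T : Finset E} (h : S ⊆ T) (e : E) : pA ea S e ⊆ pA ea T e := by
  intro g hg; rw [mem_pA] at hg ⊢; exact ⟨h hg.1, hg.2⟩

lemma pB_mono {S T : Finset E} (h : S ⊆ T) (e : E) : pB eb S e ⊆ pB eb T e := by
  intro g hg; rw [mem_pB] at hg ⊢; exact ⟨h hg.1, hg.2⟩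

lemma properOn_mono {f : E → ZMod 4} {S T : Finset E} (h : S ⊆ T)
    (hf : ProperOn ea eb r f T) : ProperOn ea eb r f S :=
  ⟨fun x hx y hy => hf.1 x (h hx) y (h hy), fun x hx y hy => hf.2 x (h hx) y (h hy)⟩

lemma exists_good {s : Finset (ZMod 4)} (h : s.card ≤ 3) : ∃ v : ZMod 4, v ∉ s := by
  by_contra hc
  push_neg at hc
  have : (Finset.univ : Finset (ZMod 4)) ⊆ s := fun v _ => hc v
  have := Finset.card_le_card this
  simp at this
  omega

lemma card_forb_le {f : E → ZMod 4} {S : Finset E} {e : E} :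
    (forb ea eb r f S e).card ≤ (pA ea S e).card + (pB eb S e).card := by
  refine le_trans (Finset.card_union_le _ _) ?_
  exact Nat.add_le_add (Finset.card_image_le) (Finset.card_image_le)

lemma extend {f : E → ZMod 4} {S : Finset E} {e : E} {v : ZMod 4}
    (hf : ProperOn ea eb r f S) (he : e ∉ S) (hv : v ∉ forb ea eb r f S e) :
    ProperOn ea eb r (Function.update f e v) (insert e S) := by
  have hmemS : ∀ y, y ∈ S → y ≠ e := fun y hy h => he (h ▸ hy)
  have hupd : ∀ x ∈ S, Function.update f e v x = f x := by
    intro x hx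
    exact Function.update_of_ne (hmemS x hx) _ _
  have hue : Function.update f e v e = v := Function.update_self _ _ _
  have hAforb : ∀ y ∈ S, ea y = ea e → v ≠ f y := by
    intro y hy heq hvy
    exact hv (Finset.mem_union_left _ (Finset.mem_image.mpr
      ⟨y, mem_pA.mpr ⟨hy, hmemS y hy, heq⟩, hvy.symm⟩))
  have hBforb : ∀ y ∈ S, eb y = eb e → v + (r e : ZMod 4) ≠ f y + (r y : ZMod 4) := by
    intro y hy heq hvy
    refine hv (Finset.mem_union_right _ (Finset.mem_image.mpr
      ⟨y, mem_pB.mpr ⟨hy, hmemS y hy, heq⟩, ?_⟩))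
    have : v = f y + (r y : ZMod 4) - (r e : ZMod 4) := by
      rw [eq_sub_iff_add_eq]; linear_combination hvy
    exact this.symm
  constructor
  · intro x hx y hy hne heq
    rcases Finset.mem_insert.mp hx with hx | hx <;> rcases Finset.mem_insert.mp hy with hy | hy
    · exact absurd (hx.trans hy.symm) hne
    · rw [hx, hue, hupd y hy]
      exact hAforb y hy (by rw [← hx, heq])
    · rw [hy, hue, hupd x hx]
      exact fun h => hAforb x hx (by rw [← hy, ← heq]) h.symm
    · rw [hupd x hx, hupd y hy]; exact hf.1 x hx y hy hne heq
  · intro x hx y hy hne heq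
    rcases Finset.mem_insert.mp hx with hx | hx <;> rcases Finset.mem_insert.mp hy with hy | hy
    · exact absurd (hx.trans hy.symm) hne
    · rw [hx, hue, hupd y hy]
      exact fun h => hBforb y hy (by rw [← hx, heq]) (by rw [← hx] at h ⊢; linear_combination h)
    · rw [hy, hue, hupd x hx]
      exact fun h => hBforb x hx (by rw [← hy, ← heq]) (by rw [← hy] at h ⊢; linear_combination h.symm)
    · rw [hupd x hx, hupd y hy]; exact hf.2 x hx y hy hne heq

end

section
variable (ea : E → A) (eb : E → B)

def ReachN (S : Finset E) : ℕ → E → E → Prop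
  | 0, x, y => x = y ∧ x ∈ S
  | (n+1), x, y => ∃ w, Rel ea eb S x w ∧ ReachN S n w y

variable {ea eb}

lemma rel_symm {S : Finset E} {x y : E} (h : Rel ea eb S x y) : Rel ea eb S y x :=
  ⟨h.2.1, h.1, h.2.2.1.symm, h.2.2.2.imp Eq.symm Eq.symm⟩

lemma reach_symm {S : Finset E} {x y : E} (h : Reach ea eb S x y) : Reach ea eb S y x :=
  by
    haveI : Std.Symm (Rel ea eb S) := ⟨fun _ _ => rel_symm⟩
    exact (Relation.ReflTransGen.stdSymm (r := Rel ea eb S)).symm _ _ h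

lemma reach_mem {S : Finset E} {x y : E} (h : Reach ea eb S x y) (hy : y ∈ S) : x ∈ S := by
  induction h using Relation.ReflTransGen.head_induction_on with
  | refl => exact hy
  | head hrel _ _ => exact hrel.1

lemma reach_to_reachN {S : Finset E} {x y : E} (h : Reach ea eb S x y) (hx : x ∈ S) :
    ∃ n, ReachN ea eb S n x y := by
  induction h using Relation.ReflTransGen.head_induction_on with
  | refl => exact ⟨0, rfl, hx⟩
  | head hrel _ ih =>
      obtain ⟨n, hn⟩ := ih hrel.2.1
      exact ⟨n + 1, _, hrel, hn⟩

lemma reachN_to_reach {S : Finset E} {n : ℕ} {x y : E} (h : ReachN ea eb S n x y) :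
    Reach ea eb S x y := by
  induction n generalizing x with
  | zero => exact h.1 ▸ Relation.ReflTransGen.refl
  | succ n ih =>
      obtain ⟨w, hrel, hw⟩ := h
      exact Relation.ReflTransGen.head hrel (ih hw)

noncomputable def dd (S : Finset E) (z x : E) : ℕ :=
  if h : ∃ n, ReachN ea eb S n x z then Nat.find h else 0

lemma dd_step {S : Finset E} {z x : E} (hx : x ∈ S) (hxz : x ≠ z) (h : Reach ea eb S x z) :
    ∃ y, Rel ea eb S x y ∧ dd (ea := ea) (eb := eb) S z y < dd (ea := ea) (eb := eb) S z x ∧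
      Reach ea eb S y z := by
  have hex : ∃ n, ReachN ea eb S n x z := reach_to_reachN h hx
  have hspec : ReachN ea eb S (Nat.find hex) x z := Nat.find_spec hex
  have hdx : dd (ea := ea) (eb := eb) S z x = Nat.find hex := dif_pos hex
  match hm : Nat.find hex, hspec with
  | 0, hs => exact absurd hs.1 hxz
  | (m+1), hs =>
      obtain ⟨w, hrel, hw⟩ := hs
      have hexw : ∃ n, ReachN ea eb S n w z := ⟨m, hw⟩
      have : dd (ea := ea) (eb := eb) S z w ≤ m := by
        rw [dd, dif_pos hexw]
        exact Nat.find_min' hexw hw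
      refine ⟨w, hrel, ?_, reachN_to_reach hw⟩
      rw [hdx, hm]
      omega

lemma reach_erase_max {T : Finset E} {z x₀ : E} (hz : z ∈ T) (hx₀z : x₀ ≠ z)
    (hmax : ∀ y ∈ T, y ≠ z → dd (ea := ea) (eb := eb) T z y ≤ dd (ea := ea) (eb := eb) T z x₀)
    (hall : ∀ x ∈ T, Reach ea eb T x z) :
    ∀ y ∈ T, y ≠ x₀ → Reach ea eb (T.erase x₀) y z := by
  have key : ∀ n, ∀ y ∈ T, y ≠ x₀ → dd (ea := ea) (eb := eb) T z y ≤ n →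
      Reach ea eb (T.erase x₀) y z := by
    intro n
    induction n with
    | zero =>
        intro y hy hyx hdy
        by_cases hyz : y = z
        · rw [hyz]; exact Relation.ReflTransGen.refl
        · obtain ⟨y', hrel, hlt, _⟩ := dd_step hy hyz (hall y hy)
          omega
    | succ n ih =>
        intro y hy hyx hdy
        by_cases hyz : y = z
        · rw [hyz]; exact Relation.ReflTransGen.refl
        · obtain ⟨y', hrel, hlt, hr⟩ := dd_step hy hyz (hall y hy)
          have hy'x : y' ≠ x₀ := by
            intro h
            rw [h] at hlt
            exact absurd (hmax y hy hyz) (by omega)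
          have hy'T : y' ∈ T := hrel.2.1
          have : Reach ea eb (T.erase x₀) y' z := ih y' hy'T hy'x (by omega)
          refine Relation.ReflTransGen.head ?_ this
          exact ⟨Finset.mem_erase.mpr ⟨hyx, hy⟩, Finset.mem_erase.mpr ⟨hy'x, hy'T⟩,
            hrel.2.2.1, hrel.2.2.2⟩
  intro y hy hyx
  exact key _ y hy hyx le_rfl

lemma transition {S : Finset E} {P : E → Prop} :
    ∀ {x y : E}, Reach ea eb S x y → P x → ¬ P y →
      ∃ u w, Rel ea eb S u w ∧ P u ∧ ¬ P w := by
  intro x y h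
  induction h with
  | refl => intro h1 h2; exact absurd h1 h2
  | @tail b c hxb hrel ih =>
      intro hx hy
      by_cases hb : P b
      · exact ⟨b, c, hrel, hb, hy⟩
      · exact ih hx hb

end

section
variable {ea : E → A} {eb : E → B}

lemma filter_eq_insert_pA {U : Finset E} {e : E} (he : e ∈ U) :
    U.filter (fun g => ea g = ea e) = insert e (pA ea U e) := by
  ext g
  simp only [Finset.mem_filter, Finset.mem_insert, mem_pA]
  constructor
  · rintro ⟨h1, h2⟩
    by_cases hge : g = e
    · exact Or.inl hge
    · exact Or.inr ⟨h1, hge, h2⟩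
  · rintro (rfl | ⟨h1, _, h3⟩)
    · exact ⟨he, rfl⟩
    · exact ⟨h1, h3⟩

lemma filter_eq_insert_pB {U : Finset E} {e : E} (he : e ∈ U) :
    U.filter (fun g => eb g = eb e) = insert e (pB eb U e) := by
  ext g
  simp only [Finset.mem_filter, Finset.mem_insert, mem_pB]
  constructor
  · rintro ⟨h1, h2⟩
    by_cases hge : g = e
    · exact Or.inl hge
    · exact Or.inr ⟨h1, hge, h2⟩
  · rintro (rfl | ⟨h1, _, h3⟩)
    · exact ⟨he, rfl⟩
    · exact ⟨h1, h3⟩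

lemma degA_eq_three {U : Finset E} (hU : ∀ e ∈ U, (pA ea U e).card = 2 ∧ (pB eb U e).card = 2)
    {e : E} (he : e ∈ U) : (U.filter fun g => ea g = ea e).card = 3 := by
  rw [filter_eq_insert_pA he, Finset.card_insert_of_notMem (by simp [mem_pA]), (hU e he).1]

lemma degB_eq_three {U : Finset E} (hU : ∀ e ∈ U, (pA ea U e).card = 2 ∧ (pB eb U e).card = 2)
    {e : E} (he : e ∈ U) : (U.filter fun g => eb g = eb e).card = 3 := by
  rw [filter_eq_insert_pB he, Finset.card_insert_of_notMem (by simp [mem_pB]), (hU e he).2]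

lemma count_dvd_A {U : Finset E} (hU : ∀ e ∈ U, (pA ea U e).card = 2 ∧ (pB eb U e).card = 2)
    (WA : Finset A) : 3 ∣ (U.filter fun e => ea e ∈ WA).card := by
  have hsplit : U.filter (fun e => ea e ∈ WA)
      = ((U.image ea) ∩ WA).biUnion (fun v => U.filter fun e => ea e = v) := by
    ext g
    simp only [Finset.mem_filter, Finset.mem_biUnion, Finset.mem_inter, Finset.mem_image]
    constructor
    · rintro ⟨h1, h2⟩
      exact ⟨ea g, ⟨⟨g, h1, rfl⟩, h2⟩, h1, rfl⟩
    · rintro ⟨v, ⟨_, hv⟩, hg, rfl⟩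
      exact ⟨hg, hv⟩
  have hdisj : ∀ x ∈ (U.image ea) ∩ WA, ∀ y ∈ (U.image ea) ∩ WA, x ≠ y →
      Disjoint (U.filter fun e => ea e = x) (U.filter fun e => ea e = y) := by
    intro x _ y _ hxy
    rw [Finset.disjoint_left]
    intro e hex hey
    rw [Finset.mem_filter] at hex hey
    exact hxy (hex.2 ▸ hey.2)
  rw [hsplit, Finset.card_biUnion hdisj]
  have hterm : ∀ v ∈ (U.image ea) ∩ WA, (U.filter fun e => ea e = v).card = 3 := by
    intro v hv
    obtain ⟨e₀, he₀, rfl⟩ := Finset.mem_image.mp (Finset.mem_inter.mp hv).1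
    exact degA_eq_three hU he₀
  rw [Finset.sum_congr rfl hterm, Finset.sum_const, smul_eq_mul]
  exact ⟨_, mul_comm _ _⟩

lemma count_dvd_B {U : Finset E} (hU : ∀ e ∈ U, (pA ea U e).card = 2 ∧ (pB eb U e).card = 2)
    (WB : Finset B) : 3 ∣ (U.filter fun e => eb e ∈ WB).card := by
  have hsplit : U.filter (fun e => eb e ∈ WB)
      = ((U.image eb) ∩ WB).biUnion (fun v => U.filter fun e => eb e = v) := by
    ext g
    simp only [Finset.mem_filter, Finset.mem_biUnion, Finset.mem_inter, Finset.mem_image]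
    constructor
    · rintro ⟨h1, h2⟩
      exact ⟨eb g, ⟨⟨g, h1, rfl⟩, h2⟩, h1, rfl⟩
    · rintro ⟨v, ⟨_, hv⟩, hg, rfl⟩
      exact ⟨hg, hv⟩
  have hdisj : ∀ x ∈ (U.image eb) ∩ WB, ∀ y ∈ (U.image eb) ∩ WB, x ≠ y →
      Disjoint (U.filter fun e => eb e = x) (U.filter fun e => eb e = y) := by
    intro x _ y _ hxy
    rw [Finset.disjoint_left]
    intro e hex hey
    rw [Finset.mem_filter] at hex hey
    exact hxy (hex.2 ▸ hey.2)
  rw [hsplit, Finset.card_biUnion hdisj]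
  have hterm : ∀ v ∈ (U.image eb) ∩ WB, (U.filter fun e => eb e = v).card = 3 := by
    intro v hv
    obtain ⟨e₀, he₀, rfl⟩ := Finset.mem_image.mp (Finset.mem_inter.mp hv).1
    exact degB_eq_three hU he₀
  rw [Finset.sum_congr rfl hterm, Finset.sum_const, smul_eq_mul]
  exact ⟨_, mul_comm _ _⟩

lemma card_dvd_U {U : Finset E} (hU : ∀ e ∈ U, (pA ea U e).card = 2 ∧ (pB eb U e).card = 2) :
    3 ∣ U.card := by
  have := count_dvd_A hU (U.image ea)
  rwa [Finset.filter_true_of_mem (fun e he => Finset.mem_image_of_mem ea he)] at this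

lemma card_split {S : Finset E} (P : E → Prop) [DecidablePred P] {a c : E}
    (ha : a ∈ S) (hc : c ∈ S) (hac : a ≠ c) :
    (S.filter P).card
      = (((S.erase a).erase c).filter P).card
        + ((if P a then 1 else 0) + (if P c then 1 else 0)) := by
  have h1 : S = insert a (insert c ((S.erase a).erase c)) := by
    ext x
    simp only [Finset.mem_insert, Finset.mem_erase]
    constructor
    · intro hx
      by_cases h2 : x = a
      · exact Or.inl h2
      · by_cases h3 : x = c
        · exact Or.inr (Or.inl h3)
        · exact Or.inr (Or.inr ⟨h3, h2, hx⟩)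
    · rintro (rfl | rfl | ⟨_, _, hx⟩) <;> assumption
  have hka : a ∉ insert c ((S.erase a).erase c) := by
    simp only [Finset.mem_insert, Finset.mem_erase]
    push_neg
    exact ⟨hac, fun _ h _ => absurd rfl h⟩
  have hkc : c ∉ (S.erase a).erase c := by simp
  conv_lhs => rw [h1]
  rw [Finset.filter_insert, Finset.filter_insert]
  have haF : a ∉ Finset.filter P ((S.erase a).erase c) := fun h =>
    (Finset.mem_erase.mp (Finset.mem_erase.mp (Finset.mem_of_mem_filter _ h)).2).1 rfl
  have hcF : c ∉ Finset.filter P ((S.erase a).erase c) := fun h =>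
    (Finset.mem_erase.mp (Finset.mem_of_mem_filter _ h)).1 rfl
  by_cases hPa : P a <;> by_cases hPc : P c <;>
    simp only [hPa, hPc, if_true, if_false]
  · rw [Finset.card_insert_of_notMem (by
        simp only [Finset.mem_insert]; push_neg; exact ⟨hac, haF⟩),
      Finset.card_insert_of_notMem hcF]
  · rw [Finset.card_insert_of_notMem haF]
  · rw [Finset.card_insert_of_notMem hcF]
  · omega

end

section
variable (ea : E → A) (eb : E → B)

def Bad (U : Finset E) (a c : E) : Prop :=
  ∃ (WA : Finset A) (WB : Finset B),
    (∀ e ∈ U, e ≠ a → e ≠ c → (ea e ∈ WA ↔ eb e ∈ WB)) ∧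
    (∃ x ∈ U, x ≠ a ∧ x ≠ c ∧ ea x ∈ WA ∧ eb x ∈ WB) ∧
    (∃ y ∈ U, y ≠ a ∧ y ≠ c ∧ ea y ∉ WA ∧ eb y ∉ WB)

variable {ea eb}

lemma bad_symm {U : Finset E} {a c : E} (h : Bad ea eb U a c) : Bad ea eb U c a := by
  obtain ⟨WA, WB, hiff, hin, hout⟩ := h
  exact ⟨WA, WB, fun e he h1 h2 => hiff e he h2 h1,
    (by obtain ⟨x, h1, h2, h3, h4⟩ := hin; exact ⟨x, h1, h3, h2, h4⟩),
    (by obtain ⟨y, h1, h2, h3, h4⟩ := hout; exact ⟨y, h1, h3, h2, h4⟩)⟩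

lemma cut_arith {U : Finset E} (hU : ∀ e ∈ U, (pA ea U e).card = 2 ∧ (pB eb U e).card = 2)
    {WA : Finset A} {WB : Finset B} {a c : E}
    (hiff : ∀ e ∈ U, e ≠ a → e ≠ c → (ea e ∈ WA ↔ eb e ∈ WB))
    (ha : a ∈ U) (hc : c ∈ U) (hac : a ≠ c) :
    ∃ IN OUT u : ℕ,
      (0 < IN → ∃ x ∈ U, x ≠ a ∧ x ≠ c ∧ ea x ∈ WA ∧ eb x ∈ WB) ∧
      (0 < OUT → ∃ y ∈ U, y ≠ a ∧ y ≠ c ∧ ea y ∉ WA ∧ eb y ∉ WB) ∧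
      3 ∣ u ∧
      3 ∣ IN + ((if ea a ∈ WA then 1 else 0) + (if ea c ∈ WA then 1 else 0)) ∧
      3 ∣ IN + ((if eb a ∈ WB then 1 else 0) + (if eb c ∈ WB then 1 else 0)) ∧
      IN + ((if ea a ∈ WA then 1 else 0) + (if ea c ∈ WA then 1 else 0)) +
        (OUT + ((if ea a ∈ WA then 0 else 1) + (if ea c ∈ WA then 0 else 1))) = u ∧
      IN + ((if eb a ∈ WB then 1 else 0) + (if eb c ∈ WB then 1 else 0)) +
        (OUT + ((if eb a ∈ WB then 0 else 1) + (if eb c ∈ WB then 0 else 1))) = u := by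
  classical
  have hmemV : ∀ e, e ∈ (U.erase a).erase c ↔ e ∈ U ∧ e ≠ a ∧ e ≠ c := by
    intro e
    simp only [Finset.mem_erase]
    tauto
  have h1 : (((U.erase a).erase c).filter fun e => eb e ∈ WB).card
      = (((U.erase a).erase c).filter fun e => ea e ∈ WA).card := by
    apply congrArg
    apply Finset.filter_congr
    intro e he
    rw [hmemV] at he
    exact (hiff e he.1 he.2.1 he.2.2).symm
  have h2 : (((U.erase a).erase c).filter fun e => eb e ∉ WB).card
      = (((U.erase a).erase c).filter fun e => ea e ∉ WA).card := by
    apply congrArg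
    apply Finset.filter_congr
    intro e he
    rw [hmemV] at he
    exact not_congr (hiff e he.1 he.2.1 he.2.2).symm
  have hif : ∀ p : Prop, ∀ inst : Decidable p, (if (¬ p) then (1:ℕ) else 0) = if p then 0 else 1 := by
    intro p inst
    by_cases hp : p <;> simp [hp]
  refine ⟨(((U.erase a).erase c).filter fun e => ea e ∈ WA).card,
    (((U.erase a).erase c).filter fun e => ea e ∉ WA).card, U.card,
    ?_, ?_, card_dvd_U hU, ?_, ?_, ?_, ?_⟩
  · intro hpos
    obtain ⟨x, hx⟩ := Finset.card_pos.mp hpos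
    rw [Finset.mem_filter] at hx
    rw [hmemV] at hx
    exact ⟨x, hx.1.1, hx.1.2.1, hx.1.2.2, hx.2,
      (hiff x hx.1.1 hx.1.2.1 hx.1.2.2).mp hx.2⟩
  · intro hpos
    obtain ⟨y, hy⟩ := Finset.card_pos.mp hpos
    rw [Finset.mem_filter] at hy
    rw [hmemV] at hy
    exact ⟨y, hy.1.1, hy.1.2.1, hy.1.2.2, hy.2,
      fun h => hy.2 ((hiff y hy.1.1 hy.1.2.1 hy.1.2.2).mpr h)⟩
  · rw [← card_split (fun e => ea e ∈ WA) ha hc hac]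
    exact count_dvd_A hU WA
  · rw [← h1, ← card_split (fun e => eb e ∈ WB) ha hc hac]
    exact count_dvd_B hU WB
  · have hsplitP := card_split (fun e => ea e ∈ WA) ha hc hac
    have hsplitN := card_split (fun e => ea e ∉ WA) ha hc hac
    have htot := Finset.card_filter_add_card_filter_not (s := U)
      (fun e => ea e ∈ WA)
    beta_reduce at hsplitP hsplitN
    rw [hsplitP, hsplitN, hif _ _, hif _ _] at htot
    omega
  · have hsplitP := card_split (fun e => eb e ∈ WB) ha hc hac
    have hsplitN := card_split (fun e => eb e ∉ WB) ha hc hac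
    have htot := Finset.card_filter_add_card_filter_not (s := U)
      (fun e => eb e ∈ WB)
    beta_reduce at hsplitP hsplitN
    rw [hsplitP, hsplitN, hif _ _, hif _ _, h1, h2] at htot
    omega

lemma client1 {U : Finset E} {z₀ : E}
    (hU : ∀ e ∈ U, (pA ea U e).card = 2 ∧ (pB eb U e).card = 2)
    (hconn : ∀ x ∈ U, Reach ea eb U x z₀)
    {a c : E} (ha : a ∈ U) (hc : c ∈ U) (hac : a ≠ c) (hbad : Bad ea eb U a c) :
    ∃ (WA : Finset A) (WB : Finset B),
      (∀ e ∈ U, e ≠ a → e ≠ c → (ea e ∈ WA ↔ eb e ∈ WB)) ∧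
      ((ea a ∈ WA ∧ eb a ∉ WB ∧ ea c ∉ WA ∧ eb c ∈ WB) ∨
       (ea a ∉ WA ∧ eb a ∈ WB ∧ ea c ∈ WA ∧ eb c ∉ WB)) := by
  obtain ⟨WA, WB, hiff, ⟨x, hx, hxa, hxc, hxA, hxB⟩, ⟨y, hy, hya, hyc, hyA, hyB⟩⟩ := hbad
  refine ⟨WA, WB, hiff, ?_⟩
  have hreach : Reach ea eb U x y :=
    Relation.ReflTransGen.trans (hconn x hx) (reach_symm (hconn y hy))
  obtain ⟨u, w, hrel, hu, hw⟩ := transition (P := fun e => ea e ∈ WA ∨ eb e ∈ WB) hreach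
    (Or.inl hxA) (fun h => h.elim hyA hyB)
  push_neg at hw
  have humix : (ea u ∈ WA ∧ eb u ∉ WB) ∨ (ea u ∉ WA ∧ eb u ∈ WB) := by
    rcases hrel.2.2.2 with h | h
    · have h1 : ea u ∉ WA := by rw [h]; exact hw.1
      rcases hu with h' | h'
      · exact absurd h' h1
      · exact Or.inr ⟨h1, h'⟩
    · have h1 : eb u ∉ WB := by rw [h]; exact hw.2
      rcases hu with h' | h'
      · exact Or.inl ⟨h', h1⟩
      · exact absurd h' h1
  have huac : u = a ∨ u = c := by
    by_contra hnn
    push_neg at hnn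
    have := hiff u hrel.1 hnn.1 hnn.2
    rcases humix with ⟨h1, h2⟩ | ⟨h1, h2⟩ <;> tauto
  obtain ⟨IN, OUT, u', hINw, hOUTw, h3u, h3A, h3B, heqA, heqB⟩ := cut_arith hU hiff ha hc hac
  have hmixed : ((ea a ∈ WA ∧ eb a ∉ WB) ∨ (ea a ∉ WA ∧ eb a ∈ WB)) ∨
      ((ea c ∈ WA ∧ eb c ∉ WB) ∨ (ea c ∉ WA ∧ eb c ∈ WB)) := by
    rcases huac with rfl | rfl
    · exact Or.inl humix
    · exact Or.inr humix
  clear * - h3A h3B hmixed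
  by_cases b1 : ea a ∈ WA <;> by_cases b2 : eb a ∈ WB <;>
    by_cases b3 : ea c ∈ WA <;> by_cases b4 : eb c ∈ WB <;>
    first
      | tauto
      | (simp only [b1, b2, b3, b4, if_true, if_false] at h3A h3B; omega)

lemma witness {U : Finset E}
    (hU : ∀ e ∈ U, (pA ea U e).card = 2 ∧ (pB eb U e).card = 2)
    {WA : Finset A} {WB : Finset B} {a c : E}
    (hiff : ∀ e ∈ U, e ≠ a → e ≠ c → (ea e ∈ WA ↔ eb e ∈ WB))
    (ha : a ∈ U) (hc : c ∈ U) (hac : a ≠ c)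
    (hamix : ea a ∈ WA ↔ eb a ∉ WB) (hcmix : ea c ∈ WA ↔ eb c ∉ WB) :
    (∃ x ∈ U, x ≠ a ∧ x ≠ c ∧ ea x ∈ WA ∧ eb x ∈ WB) ∧
    (∃ y ∈ U, y ≠ a ∧ y ≠ c ∧ ea y ∉ WA ∧ eb y ∉ WB) := by
  obtain ⟨IN, OUT, u', hINw, hOUTw, h3u, h3A, h3B, heqA, heqB⟩ := cut_arith hU hiff ha hc hac
  refine ⟨hINw ?_, hOUTw ?_⟩ <;>
  · clear * - h3A h3B heqA heqB h3u hamix hcmix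
    by_cases b1 : ea a ∈ WA <;> by_cases b2 : eb a ∈ WB <;>
      by_cases b3 : ea c ∈ WA <;> by_cases b4 : eb c ∈ WB <;>
      first
        | tauto
        | (simp only [b1, b2, b3, b4, if_true, if_false] at h3A h3B heqA heqB h3u; omega)

lemma trans_bad {U : Finset E} {z₀ : E}
    (hU : ∀ e ∈ U, (pA ea U e).card = 2 ∧ (pB eb U e).card = 2)
    (hconn : ∀ x ∈ U, Reach ea eb U x z₀)
    {a b c : E} (ha : a ∈ U) (hb : b ∈ U) (hc : c ∈ U)
    (hab : a ≠ b) (hbc : b ≠ c) (hac : a ≠ c)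
    (h1 : Bad ea eb U a b) (h2 : Bad ea eb U b c) : Bad ea eb U a c := by
  obtain ⟨W1A, W1B, hiff1, hpat1⟩ := client1 hU hconn ha hb hab h1
  obtain ⟨W2A, W2B, hiff2, hpat2⟩ := client1 hU hconn hb hc hbc h2
  have hbita : (ea a ∈ W2A ↔ eb a ∈ W2B) := hiff2 a ha hab (fun h => hac h)
  have hbitc : (ea c ∈ W1A ↔ eb c ∈ W1B) := hiff1 c hc (fun h => hac h.symm) (fun h => hbc h.symm)
  refine ⟨W1A ∆ W2A, W1B ∆ W2B, ?_, ?_⟩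
  case _ =>
    intro e he hea hec
    by_cases heb : e = b
    · subst heb
      clear * - hpat1 hpat2
      simp only [Finset.mem_symmDiff]
      rcases hpat1 with ⟨p1, p2, p3, p4⟩ | ⟨p1, p2, p3, p4⟩ <;>
        rcases hpat2 with ⟨q1, q2, q3, q4⟩ | ⟨q1, q2, q3, q4⟩ <;> tauto
    · have i1 := hiff1 e he hea heb
      have i2 := hiff2 e he heb hec
      clear * - i1 i2
      simp only [Finset.mem_symmDiff]
      tauto
  case _ =>
    have hamixΔ : (ea a ∈ W1A ∆ W2A ↔ eb a ∉ W1B ∆ W2B) := by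
      clear * - hpat1 hbita
      simp only [Finset.mem_symmDiff]
      rcases hpat1 with ⟨p1, p2, p3, p4⟩ | ⟨p1, p2, p3, p4⟩ <;> tauto
    have hcmixΔ : (ea c ∈ W1A ∆ W2A ↔ eb c ∉ W1B ∆ W2B) := by
      clear * - hpat2 hbitc
      simp only [Finset.mem_symmDiff]
      rcases hpat2 with ⟨q1, q2, q3, q4⟩ | ⟨q1, q2, q3, q4⟩ <;> tauto
    have hif : ∀ e ∈ U, e ≠ a → e ≠ c → (ea e ∈ W1A ∆ W2A ↔ eb e ∈ W1B ∆ W2B) := by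
      intro e he hea hec
      by_cases heb : e = b
      · subst heb
        clear * - hpat1 hpat2
        simp only [Finset.mem_symmDiff]
        rcases hpat1 with ⟨p1, p2, p3, p4⟩ | ⟨p1, p2, p3, p4⟩ <;>
          rcases hpat2 with ⟨q1, q2, q3, q4⟩ | ⟨q1, q2, q3, q4⟩ <;> tauto
      · have i1 := hiff1 e he hea heb
        have i2 := hiff2 e he heb hec
        clear * - i1 i2
        simp only [Finset.mem_symmDiff]
        tauto
    exact witness hU hif ha hc hac hamixΔ hcmixΔ

lemma not_bad_conn {U : Finset E} {a c z : E}
    (hz : z ∈ U) (hza : z ≠ a) (hzc : z ≠ c) (hnb : ¬ Bad ea eb U a c) :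
    ∀ x ∈ U, x ≠ a → x ≠ c → Reach ea eb ((U.erase a).erase c) x z := by
  by_contra h
  push_neg at h
  obtain ⟨x₁, hx₁U, hx₁a, hx₁c, hx₁⟩ := h
  set T := (U.erase a).erase c with hT
  have hmemT : ∀ e, e ∈ T ↔ e ∈ U ∧ e ≠ a ∧ e ≠ c := by
    intro e
    simp only [hT, Finset.mem_erase]
    tauto
  set D := T.filter (fun y => Reach ea eb T y z) with hD
  have hkeyA : ∀ e ∈ T, (ea e ∈ D.image ea ↔ e ∈ D) := by
    intro e he
    constructor
    · intro hmem
      obtain ⟨d, hd, hde⟩ := Finset.mem_image.mp hmem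
      by_cases hed : e = d
      · rwa [hed]
      · rw [hD, Finset.mem_filter] at hd ⊢
        refine ⟨he, Relation.ReflTransGen.head ⟨he, hd.1, hed, Or.inl hde.symm⟩ hd.2⟩
    · exact fun hd => Finset.mem_image_of_mem ea hd
  have hkeyB : ∀ e ∈ T, (eb e ∈ D.image eb ↔ e ∈ D) := by
    intro e he
    constructor
    · intro hmem
      obtain ⟨d, hd, hde⟩ := Finset.mem_image.mp hmem
      by_cases hed : e = d
      · rwa [hed]
      · rw [hD, Finset.mem_filter] at hd ⊢
        refine ⟨he, Relation.ReflTransGen.head ⟨he, hd.1, hed, Or.inr hde.symm⟩ hd.2⟩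
    · exact fun hd => Finset.mem_image_of_mem eb hd
  have hzT : z ∈ T := (hmemT z).mpr ⟨hz, hza, hzc⟩
  have hzD : z ∈ D := Finset.mem_filter.mpr ⟨hzT, Relation.ReflTransGen.refl⟩
  have hx₁T : x₁ ∈ T := (hmemT x₁).mpr ⟨hx₁U, hx₁a, hx₁c⟩
  have hx₁D : x₁ ∉ D := fun hmem => hx₁ (Finset.mem_filter.mp hmem).2
  apply hnb
  refine ⟨D.image ea, D.image eb, ?_, ⟨z, hz, hza, hzc, ?_, ?_⟩,
    ⟨x₁, hx₁U, hx₁a, hx₁c, ?_, ?_⟩⟩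
  · intro e he hea hec
    have heT : e ∈ T := (hmemT e).mpr ⟨he, hea, hec⟩
    rw [hkeyA e heT, hkeyB e heT]
  · exact Finset.mem_image_of_mem ea hzD
  · exact Finset.mem_image_of_mem eb hzD
  · exact fun hmem => hx₁D ((hkeyA x₁ hx₁T).mp hmem)
  · exact fun hmem => hx₁D ((hkeyB x₁ hx₁T).mp hmem)

end

section
variable {ea : E → A} {eb : E → B} {r : E → ℤ}

lemma pA_erase_self {S : Finset E} {e : E} : pA ea (S.erase e) e = pA ea S e := by
  ext g
  simp only [mem_pA, Finset.mem_erase]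
  tauto

lemma pB_erase_self {S : Finset E} {e : E} : pB eb (S.erase e) e = pB eb S e := by
  ext g
  simp only [mem_pB, Finset.mem_erase]
  tauto

lemma greedy {U : Finset E} (hU : ∀ e ∈ U, (pA ea U e).card = 2 ∧ (pB eb U e).card = 2)
    {a c z : E} (hz : z ∈ U) {va vc : ZMod 4}
    (Halign : ∀ g : E → ZMod 4, g a = va → g c = vc →
      (forb ea eb r g (U.erase z) z).card ≤ 3) :
    ∀ n (T : Finset E), T.card ≤ n → T ⊆ U → z ∈ T → a ∉ T → c ∉ T →
      (∀ x ∈ T, Reach ea eb T x z) →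
      ∀ f₀ : E → ZMod 4, ProperOn ea eb r f₀ (U \ T) → f₀ a = va → f₀ c = vc →
      ∃ f, ProperOn ea eb r f U := by
  intro n
  induction n with
  | zero =>
      intro T hcard _ hzT _ _ _ _ _ _ _
      have := Finset.card_pos.mpr ⟨z, hzT⟩
      omega
  | succ n IH =>
      intro T hcard hTU hzT haT hcT hreach f₀ hf₀ hfa hfc
      by_cases hT1 : T = {z}
      · have hUT : U \ T = U.erase z := by rw [hT1, ← Finset.erase_eq]
        rw [hUT] at hf₀
        obtain ⟨v, hv⟩ := exists_good (Halign f₀ hfa hfc)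
        have hznot : z ∉ U.erase z := by simp
        have hext := extend hf₀ hznot hv
        rw [Finset.insert_erase hz] at hext
        exact ⟨_, hext⟩
      · have hTz : (T.erase z).Nonempty := by
          rcases Finset.eq_empty_or_nonempty (T.erase z) with hemp | hne
          · exact absurd (Finset.eq_singleton_iff_unique_mem.mpr ⟨hzT, fun x hx => by
              by_contra hxz
              exact absurd (Finset.mem_erase.mpr ⟨hxz, hx⟩) (by rw [hemp]; simp)⟩) hT1
          · exact hne
        obtain ⟨x₀, hx₀mem, hx₀max⟩ := Finset.exists_max_image (T.erase z)
          (dd (ea := ea) (eb := eb) T z) hTz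
        have hx₀T : x₀ ∈ T := (Finset.mem_erase.mp hx₀mem).2
        have hx₀z : x₀ ≠ z := (Finset.mem_erase.mp hx₀mem).1
        obtain ⟨y, hyrel, hylt, _⟩ := dd_step hx₀T hx₀z (hreach x₀ hx₀T)
        have hcardf : (forb ea eb r f₀ (U \ T) x₀).card ≤ 3 := by
          refine le_trans card_forb_le ?_
          have hx₀U : x₀ ∈ U := hTU hx₀T
          have hyT : y ∈ T := hyrel.2.1
          have hyne : y ≠ x₀ := (hyrel.2.2.1).symm
          rcases hyrel.2.2.2 with hshare | hshare
          · have hypA : y ∈ pA ea U x₀ := mem_pA.mpr ⟨hTU hyT, hyne, hshare.symm⟩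
            have h1 : pA ea (U \ T) x₀ ⊆ (pA ea U x₀).erase y := by
              intro g hg
              rw [mem_pA] at hg
              have hgU := (Finset.mem_sdiff.mp hg.1).1
              have hgT := (Finset.mem_sdiff.mp hg.1).2
              rw [Finset.mem_erase, mem_pA]
              exact ⟨fun h => hgT (h ▸ hyT), hgU, hg.2⟩
            have h2 : pB eb (U \ T) x₀ ⊆ pB eb U x₀ := pB_mono Finset.sdiff_subset x₀
            have hc1 := Finset.card_le_card h1
            have hc2 := Finset.card_le_card h2
            have hcA : ((pA ea U x₀).erase y).card = 1 := by
              rw [Finset.card_erase_of_mem hypA, (hU x₀ hx₀U).1]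
            have := (hU x₀ hx₀U).2
            omega
          · have hypB : y ∈ pB eb U x₀ := mem_pB.mpr ⟨hTU hyT, hyne, hshare.symm⟩
            have h1 : pB eb (U \ T) x₀ ⊆ (pB eb U x₀).erase y := by
              intro g hg
              rw [mem_pB] at hg
              have hgU := (Finset.mem_sdiff.mp hg.1).1
              have hgT := (Finset.mem_sdiff.mp hg.1).2
              rw [Finset.mem_erase, mem_pB]
              exact ⟨fun h => hgT (h ▸ hyT), hgU, hg.2⟩
            have h2 : pA ea (U \ T) x₀ ⊆ pA ea U x₀ := pA_mono Finset.sdiff_subset x₀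
            have hc1 := Finset.card_le_card h1
            have hc2 := Finset.card_le_card h2
            have hcB : ((pB eb U x₀).erase y).card = 1 := by
              rw [Finset.card_erase_of_mem hypB, (hU x₀ hx₀U).2]
            have := (hU x₀ hx₀U).1
            omega
        obtain ⟨v, hv⟩ := exists_good hcardf
        have hx₀notin : x₀ ∉ U \ T := fun h => (Finset.mem_sdiff.mp h).2 hx₀T
        have hext := extend hf₀ hx₀notin hv
        have hins : insert x₀ (U \ T) = U \ (T.erase x₀) := by
          ext g
          simp only [Finset.mem_insert, Finset.mem_sdiff, Finset.mem_erase]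
          constructor
          · rintro (rfl | ⟨h1, h2⟩)
            · exact ⟨hTU hx₀T, fun h => h.1 rfl⟩
            · exact ⟨h1, fun h => h2 h.2⟩
          · rintro ⟨h1, h2⟩
            by_cases hgx : g = x₀
            · exact Or.inl hgx
            · exact Or.inr ⟨h1, fun h => h2 ⟨hgx, h⟩⟩
        rw [hins] at hext
        have hmax' : ∀ w ∈ T, w ≠ z → dd (ea := ea) (eb := eb) T z w ≤
            dd (ea := ea) (eb := eb) T z x₀ := by
          intro w hw hwz
          exact hx₀max w (Finset.mem_erase.mpr ⟨hwz, hw⟩)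
        have hreach' := reach_erase_max hzT hx₀z hmax' hreach
        refine IH (T.erase x₀) ?_
          (fun g hg => hTU (Finset.mem_of_mem_erase hg)) ?_ ?_ ?_ ?_ _ hext ?_ ?_
        · have := Finset.card_erase_of_mem hx₀T
          have := Finset.card_pos.mpr ⟨z, hzT⟩
          omega
        · exact Finset.mem_erase.mpr ⟨Ne.symm hx₀z, hzT⟩
        · exact fun h => haT (Finset.mem_of_mem_erase h)
        · exact fun h => hcT (Finset.mem_of_mem_erase h)
        · intro x hx
          exact hreach' x (Finset.mem_of_mem_erase hx) (Finset.mem_erase.mp hx).1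
        · rw [Function.update_of_ne (fun h : a = x₀ => haT (by rw [h]; exact hx₀T)) _ _]
          exact hfa
        · rw [Function.update_of_ne (fun h : c = x₀ => hcT (by rw [h]; exact hx₀T)) _ _]
          exact hfc

end

section
variable {ea : E → A} {eb : E → B} {r : E → ℤ}

lemma theta3 : ∀ r1 r2 r3 : ZMod 4, ∃ x1 x2 x3 : ZMod 4,
    (x1 ≠ x2 ∧ x1 ≠ x3 ∧ x2 ≠ x3) ∧
    (x1 + r1 ≠ x2 + r2 ∧ x1 + r1 ≠ x3 + r3 ∧ x2 + r2 ≠ x3 + r3) := by decide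

lemma finish_triple {U : Finset E}
    (hU : ∀ e ∈ U, (pA ea U e).card = 2 ∧ (pB eb U e).card = 2)
    {z a c : E} (hzU : z ∈ U) (haU : a ∈ U) (hcU : c ∈ U)
    (hza : z ≠ a) (hzc : z ≠ c) (hac : a ≠ c)
    (haez : ea a = ea z) (hbez : eb a ≠ eb z)
    (hcez : eb c = eb z) (hcaz : ea c ≠ ea z)
    (hnb : ¬ Bad ea eb U a c) :
    ∃ f, ProperOn ea eb r f U := by
  have hmemT : ∀ e, e ∈ (U.erase a).erase c ↔ e ∈ U ∧ e ≠ a ∧ e ≠ c := by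
    intro e
    simp only [Finset.mem_erase]
    tauto
  have hzT : z ∈ (U.erase a).erase c := (hmemT z).mpr ⟨hzU, hza, hzc⟩
  have hreachT : ∀ x ∈ (U.erase a).erase c, Reach ea eb ((U.erase a).erase c) x z := by
    intro x hx
    rw [hmemT] at hx
    exact not_bad_conn hzU hza hzc hnb x hx.1 hx.2.1 hx.2.2
  -- identify partner sets at z
  obtain ⟨u1, u2, hu12, hpaz⟩ := Finset.card_eq_two.mp (hU z hzU).1
  obtain ⟨t1, t2, ht12, hpbz⟩ := Finset.card_eq_two.mp (hU z hzU).2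
  have haPA : a ∈ pA ea U z := mem_pA.mpr ⟨haU, hza.symm, haez⟩
  have hcPB : c ∈ pB eb U z := mem_pB.mpr ⟨hcU, hzc.symm, hcez⟩
  rw [hpaz, Finset.mem_insert, Finset.mem_singleton] at haPA
  rw [hpbz, Finset.mem_insert, Finset.mem_singleton] at hcPB
  obtain ⟨w₁, hpaz'⟩ : ∃ w, pA ea U z = {a, w} := by
    rcases haPA with rfl | rfl
    · exact ⟨u2, hpaz⟩
    · exact ⟨u1, by rw [hpaz]; exact Finset.pair_comm u1 a⟩
  obtain ⟨w₂, hpbz'⟩ : ∃ w, pB eb U z = {c, w} := by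
    rcases hcPB with rfl | rfl
    · exact ⟨t2, hpbz⟩
    · exact ⟨t1, by rw [hpbz]; exact Finset.pair_comm t1 c⟩
  -- initial colouring
  have hf₀ : ProperOn ea eb r
      (fun x => if x = c then (r z : ZMod 4) - (r c : ZMod 4) else 0)
      (U \ ((U.erase a).erase c)) := by
    have hUT : ∀ g, g ∈ U \ ((U.erase a).erase c) ↔ g = a ∨ g = c := by
      intro g
      rw [Finset.mem_sdiff, hmemT]
      constructor
      · rintro ⟨h1, h2⟩
        by_cases hga : g = a
        · exact Or.inl hga
        · by_cases hgc : g = c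
          · exact Or.inr hgc
          · exact absurd ⟨h1, hga, hgc⟩ h2
      · rintro (rfl | rfl)
        · exact ⟨haU, fun h => h.2.1 rfl⟩
        · exact ⟨hcU, fun h => h.2.2 rfl⟩
    constructor
    · intro x hx y hy hne heq
      rw [hUT] at hx hy
      exfalso
      rcases hx with rfl | rfl <;> rcases hy with rfl | rfl
      · exact hne rfl
      · exact hcaz (heq.symm.trans haez)
      · exact hcaz (heq.trans haez)
      · exact hne rfl
    · intro x hx y hy hne heq
      rw [hUT] at hx hy
      exfalso
      rcases hx with rfl | rfl <;> rcases hy with rfl | rfl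
      · exact hne rfl
      · exact hbez (heq.trans hcez)
      · exact hbez (heq.symm.trans hcez)
      · exact hne rfl
  -- alignment bound
  have Halign : ∀ g : E → ZMod 4, g a = 0 → g c = (r z : ZMod 4) - (r c : ZMod 4) →
      (forb ea eb r g (U.erase z) z).card ≤ 3 := by
    intro g hga hgc
    have hsub : forb ea eb r g (U.erase z) z ⊆
        insert (0 : ZMod 4) (insert (g w₁) {g w₂ + (r w₂ : ZMod 4) - (r z : ZMod 4)}) := by
      intro v hv
      simp only [forb, pA_erase_self, pB_erase_self, hpaz', hpbz',
        Finset.mem_union, Finset.mem_image, Finset.mem_insert,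
        Finset.mem_singleton] at hv
      simp only [Finset.mem_insert, Finset.mem_singleton]
      rcases hv with ⟨x, hx, rfl⟩ | ⟨x, hx, rfl⟩
      · rcases hx with rfl | rfl
        · exact Or.inl hga
        · exact Or.inr (Or.inl rfl)
      · rcases hx with rfl | rfl
        · refine Or.inl ?_
          rw [hgc]
          ring
        · exact Or.inr (Or.inr rfl)
    refine le_trans (Finset.card_le_card hsub) ?_
    refine le_trans (Finset.card_insert_le _ _) ?_
    have h1 : (insert (g w₁) ({g w₂ + (r w₂ : ZMod 4) - (r z : ZMod 4)} : Finset (ZMod 4))).card ≤ 2 := by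
      refine le_trans (Finset.card_insert_le _ _) ?_
      simp
    omega
  refine greedy hU hzU Halign ((U.erase a).erase c).card ((U.erase a).erase c) le_rfl
    (fun g hg => ((hmemT g).mp hg).1) hzT ?_ ?_ hreachT _ hf₀ ?_ ?_
  · intro h
    exact ((hmemT a).mp h).2.1 rfl
  · intro h
    exact ((hmemT c).mp h).2.2 rfl
  · simp [hac]
  · simp

end

section
variable {ea : E → A} {eb : E → B} {r : E → ℤ}

lemma component {U : Finset E}
    (hU : ∀ e ∈ U, (pA ea U e).card = 2 ∧ (pB eb U e).card = 2)
    {z₀ : E} (hz₀ : z₀ ∈ U) (hconn : ∀ x ∈ U, Reach ea eb U x z₀) :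
    ∃ f, ProperOn ea eb r f U := by
  by_cases hθ : pA ea U z₀ ⊆ pB eb U z₀
  · -- theta component
    have hPQ : pA ea U z₀ = pB eb U z₀ :=
      Finset.eq_of_subset_of_card_le hθ (by rw [(hU z₀ hz₀).1, (hU z₀ hz₀).2])
    obtain ⟨a1, a2, h12, hpa⟩ := Finset.card_eq_two.mp (hU z₀ hz₀).1
    have ha1 : a1 ∈ pA ea U z₀ := by rw [hpa]; simp
    have ha2 : a2 ∈ pA ea U z₀ := by rw [hpa]; simp
    obtain ⟨ha1U, ha1z, ha1ea⟩ := mem_pA.mp ha1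
    obtain ⟨ha2U, ha2z, ha2ea⟩ := mem_pA.mp ha2
    obtain ⟨_, _, ha1eb⟩ := mem_pB.mp (hPQ ▸ ha1)
    obtain ⟨_, _, ha2eb⟩ := mem_pB.mp (hPQ ▸ ha2)
    have htriple : ∀ x ∈ U, x = z₀ ∨ x = a1 ∨ x = a2 := by
      have key : ∀ x, Relation.ReflTransGen (Rel ea eb U) z₀ x →
          (x = z₀ ∨ x = a1 ∨ x = a2) := by
        intro x h
        induction h with
        | refl => exact Or.inl rfl
        | @tail b c hzb hrel ih =>
            have hbz : ea b = ea z₀ ∧ eb b = eb z₀ := by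
              rcases ih with rfl | rfl | rfl
              · exact ⟨rfl, rfl⟩
              · exact ⟨ha1ea, ha1eb⟩
              · exact ⟨ha2ea, ha2eb⟩
            have hcU : c ∈ U := hrel.2.1
            rcases hrel.2.2.2 with hsh | hsh
            · have : c ∈ U.filter (fun g => ea g = ea z₀) :=
                Finset.mem_filter.mpr ⟨hcU, hsh ▸ hbz.1⟩
              rw [filter_eq_insert_pA hz₀, hpa] at this
              simpa using this
            · have : c ∈ U.filter (fun g => eb g = eb z₀) :=
                Finset.mem_filter.mpr ⟨hcU, hsh ▸ hbz.2⟩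
              rw [filter_eq_insert_pB hz₀, ← hPQ, hpa] at this
              simpa using this
      intro x hx
      exact key x (reach_symm (hconn x hx))
    obtain ⟨x1, x2, x3, ⟨hd1, hd2, hd3⟩, ⟨hB1, hB2, hB3⟩⟩ :=
      theta3 (r z₀ : ZMod 4) (r a1 : ZMod 4) (r a2 : ZMod 4)
    have ha1z' : a1 ≠ z₀ := ha1z
    have ha2z' : a2 ≠ z₀ := ha2z
    have h21 : a2 ≠ a1 := Ne.symm h12
    refine ⟨fun x => if x = z₀ then x1 else if x = a1 then x2 else x3, ?_, ?_⟩
    · intro x hx y hy hne heq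
      rcases htriple x hx with rfl | rfl | rfl <;> rcases htriple y hy with rfl | rfl | rfl <;>
        simp only [if_pos rfl, if_neg ha1z', if_neg ha2z', if_neg h12, if_neg h21] <;>
        first
          | exact absurd rfl hne
          | exact hd1
          | exact hd2
          | exact hd3
          | exact Ne.symm hd1
          | exact Ne.symm hd2
          | exact Ne.symm hd3
    · intro x hx y hy hne heq
      rcases htriple x hx with rfl | rfl | rfl <;> rcases htriple y hy with rfl | rfl | rfl <;>
        simp only [if_pos rfl, if_neg ha1z', if_neg ha2z', if_neg h12, if_neg h21] <;>
        first
          | exact absurd rfl hne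
          | exact hB1
          | exact hB2
          | exact hB3
          | exact Ne.symm hB1
          | exact Ne.symm hB2
          | exact Ne.symm hB3
  · -- not theta
    obtain ⟨w, hwPA, hwPB⟩ := Finset.not_subset.mp hθ
    obtain ⟨hwU, hwz, hwea⟩ := mem_pA.mp hwPA
    have hweb : eb w ≠ eb z₀ := fun h => hwPB (mem_pB.mpr ⟨hwU, hwz, h⟩)
    by_cases hpar : ∃ x, x ∈ pA ea U z₀ ∧ x ∈ pB eb U z₀
    · -- parallel edge p to z₀ exists
      obtain ⟨p, hpPA, hpPB⟩ := hpar
      obtain ⟨hpU, hpz, hpea⟩ := mem_pA.mp hpPA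
      obtain ⟨_, _, hpeb⟩ := mem_pB.mp hpPB
      have hpw : p ≠ w := fun h => hwPB (h ▸ hpPB)
      have hpa' : pA ea U z₀ = {p, w} := by
        refine (Finset.eq_of_subset_of_card_le ?_ ?_).symm
        · intro g hg
          rcases Finset.mem_insert.mp hg with rfl | hg'
          · exact hpPA
          · rw [Finset.mem_singleton] at hg'
            exact hg' ▸ hwPA
        · rw [(hU z₀ hz₀).1, Finset.card_insert_of_notMem (by simpa using hpw),
            Finset.card_singleton]
      -- pick d in pB U w
      have hdne : (pB eb U w).Nonempty := by
        rw [← Finset.card_pos, (hU w hwU).2]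
        omega
      obtain ⟨d, hdPB⟩ := hdne
      obtain ⟨hdU, hdw, hdeb⟩ := mem_pB.mp hdPB
      have hdz : d ≠ z₀ := fun h => hweb (h ▸ hdeb).symm
      have hdp : d ≠ p := fun h => hweb ((h ▸ hdeb).symm.trans hpeb)
      have hdea : ea d ≠ ea z₀ := by
        intro h
        have : d ∈ pA ea U z₀ := mem_pA.mpr ⟨hdU, hdz, h⟩
        rw [hpa'] at this
        rcases Finset.mem_insert.mp this with h' | h'
        · exact hdp h'
        · exact hdw (Finset.mem_singleton.mp h')
      have hzp : z₀ ≠ p := Ne.symm hpz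
      have hzd : z₀ ≠ d := Ne.symm hdz
      by_cases hb1 : Bad ea eb U z₀ d
      · have hb2 : ¬ Bad ea eb U p d := by
          intro hb2
          have hbad := trans_bad hU hconn hz₀ hdU hpU hzd hdp hzp hb1 (bad_symm hb2)
          obtain ⟨WA, WB, _, hpat⟩ := client1 hU hconn hz₀ hpU hzp hbad
          rcases hpat with ⟨q1, _, q3, _⟩ | ⟨q1, _, q3, _⟩
          · exact q3 (hpea ▸ q1)
          · exact q1 (hpea ▸ q3)
        refine finish_triple hU hwU hpU hdU (Ne.symm hpw) (Ne.symm hdw) (Ne.symm hdp) ?_ ?_ hdeb ?_ hb2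
        · exact hpea.trans hwea.symm
        · intro h
          exact hweb (h.symm.trans hpeb)
        · intro h
          exact hdea (h.trans hwea)
      · refine finish_triple hU hwU hz₀ hdU hwz (Ne.symm hdw) hzd hwea.symm ?_ hdeb ?_ hb1
        · exact fun h => hweb h.symm
        · intro h
          exact hdea (h.trans hwea)
    · -- no parallel
      push_neg at hpar
      obtain ⟨t1, t2, ht12, hpbz⟩ := Finset.card_eq_two.mp (hU z₀ hz₀).2
      have ht1 : t1 ∈ pB eb U z₀ := by rw [hpbz]; simp
      have ht2 : t2 ∈ pB eb U z₀ := by rw [hpbz]; simp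
      obtain ⟨ht1U, ht1z, ht1eb⟩ := mem_pB.mp ht1
      obtain ⟨ht2U, ht2z, ht2eb⟩ := mem_pB.mp ht2
      have ht1ea : ea t1 ≠ ea z₀ := fun h => hpar t1 (mem_pA.mpr ⟨ht1U, ht1z, h⟩) ht1
      have ht2ea : ea t2 ≠ ea z₀ := fun h => hpar t2 (mem_pA.mpr ⟨ht2U, ht2z, h⟩) ht2
      have hwt1 : w ≠ t1 := fun h => hweb (h ▸ ht1eb)
      have hwt2 : w ≠ t2 := fun h => hweb (h ▸ ht2eb)
      by_cases hb1 : Bad ea eb U w t1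
      · have hb2 : ¬ Bad ea eb U w t2 := by
          intro hb2
          have hbad := trans_bad hU hconn ht1U hwU ht2U (Ne.symm hwt1) hwt2
            ht12 (bad_symm hb1) hb2
          obtain ⟨WA, WB, _, hpat⟩ := client1 hU hconn ht1U ht2U ht12 hbad
          rcases hpat with ⟨_, q2, _, q4⟩ | ⟨_, q2, _, q4⟩
          · exact q2 (by rw [ht1eb.trans ht2eb.symm]; exact q4)
          · exact q4 (by rw [← (ht1eb.trans ht2eb.symm)]; exact q2)
        exact finish_triple hU hz₀ hwU ht2U (Ne.symm hwz) (Ne.symm ht2z) hwt2 hwea hweb ht2eb ht2ea hb2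
      · exact finish_triple hU hz₀ hwU ht1U (Ne.symm hwz) (Ne.symm ht1z) hwt1 hwea hweb ht1eb ht1ea hb1

end

section
variable {ea : E → A} {eb : E → B} {r : E → ℤ}

lemma reach_filter {S : Finset E} {z₀ : E} :
    ∀ {x}, Reach ea eb S x z₀ →
      Reach ea eb (S.filter fun y => Reach ea eb S y z₀) x z₀ := by
  intro x h
  induction h using Relation.ReflTransGen.head_induction_on with
  | refl => exact Relation.ReflTransGen.refl
  | @head b c hrel hreach ih =>
      have hb : b ∈ S.filter fun y => Reach ea eb S y z₀ :=
        Finset.mem_filter.mpr ⟨hrel.1, Relation.ReflTransGen.head hrel hreach⟩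
      have hc : c ∈ S.filter fun y => Reach ea eb S y z₀ :=
        Finset.mem_filter.mpr ⟨hrel.2.1, hreach⟩
      exact Relation.ReflTransGen.head ⟨hb, hc, hrel.2.2.1, hrel.2.2.2⟩ ih

lemma empty_proper : ProperOn ea eb r (fun _ => (0 : ZMod 4)) (∅ : Finset E) := by
  constructor <;> intro x hx <;> simp at hx

lemma hard : ∀ n (S : Finset E), S.card ≤ n →
    (∀ e ∈ S, (pA ea S e).card = 2 ∧ (pB eb S e).card = 2) →
    ∃ f, ProperOn ea eb r f S := by
  intro n
  induction n with
  | zero =>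
      intro S hcard _
      have hS : S = ∅ := Finset.card_eq_zero.mp (by omega)
      rw [hS]
      exact ⟨_, empty_proper⟩
  | succ n IH =>
      intro S hcard hreg
      rcases Finset.eq_empty_or_nonempty S with rfl | ⟨z₀, hz₀⟩
      · exact ⟨_, empty_proper⟩
      · have hCsub : S.filter (fun x => Reach ea eb S x z₀) ⊆ S := Finset.filter_subset _ _
        set C := S.filter (fun x => Reach ea eb S x z₀) with hC
        have hz₀C : z₀ ∈ C := Finset.mem_filter.mpr ⟨hz₀, Relation.ReflTransGen.refl⟩
        have hclosed : ∀ e ∈ C, ∀ g ∈ S, (ea g = ea e ∨ eb g = eb e) → g ∈ C := by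
          intro e he g hg hsh
          by_cases hge : g = e
          · rwa [hge]
          · have heC := Finset.mem_filter.mp he
            exact Finset.mem_filter.mpr
              ⟨hg, Relation.ReflTransGen.head ⟨hg, heC.1, hge, hsh⟩ heC.2⟩
        have hpAC : ∀ e ∈ C, pA ea C e = pA ea S e := by
          intro e he
          ext g
          simp only [mem_pA]
          constructor
          · rintro ⟨h1, h2, h3⟩
            exact ⟨hCsub h1, h2, h3⟩
          · rintro ⟨h1, h2, h3⟩
            exact ⟨hclosed e he g h1 (Or.inl h3), h2, h3⟩
        have hpBC : ∀ e ∈ C, pB eb C e = pB eb S e := by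
          intro e he
          ext g
          simp only [mem_pB]
          constructor
          · rintro ⟨h1, h2, h3⟩
            exact ⟨hCsub h1, h2, h3⟩
          · rintro ⟨h1, h2, h3⟩
            exact ⟨hclosed e he g h1 (Or.inr h3), h2, h3⟩
        have hregC : ∀ e ∈ C, (pA ea C e).card = 2 ∧ (pB eb C e).card = 2 := by
          intro e he
          rw [hpAC e he, hpBC e he]
          exact hreg e (hCsub he)
        have hconnC : ∀ x ∈ C, Reach ea eb C x z₀ := by
          intro x hx
          exact reach_filter (Finset.mem_filter.mp hx).2
        obtain ⟨f₁, hf₁⟩ := component (r := r) hregC hz₀C hconnC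
        have hpASC : ∀ e ∈ S \ C, pA ea (S \ C) e = pA ea S e := by
          intro e he
          ext g
          simp only [mem_pA, Finset.mem_sdiff]
          constructor
          · rintro ⟨⟨h1, _⟩, h2, h3⟩
            exact ⟨h1, h2, h3⟩
          · rintro ⟨h1, h2, h3⟩
            refine ⟨⟨h1, fun hgC => ?_⟩, h2, h3⟩
            exact (Finset.mem_sdiff.mp he).2
              (hclosed g hgC e (Finset.mem_sdiff.mp he).1 (Or.inl h3.symm))
        have hpBSC : ∀ e ∈ S \ C, pB eb (S \ C) e = pB eb S e := by
          intro e he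
          ext g
          simp only [mem_pB, Finset.mem_sdiff]
          constructor
          · rintro ⟨⟨h1, _⟩, h2, h3⟩
            exact ⟨h1, h2, h3⟩
          · rintro ⟨h1, h2, h3⟩
            refine ⟨⟨h1, fun hgC => ?_⟩, h2, h3⟩
            exact (Finset.mem_sdiff.mp he).2
              (hclosed g hgC e (Finset.mem_sdiff.mp he).1 (Or.inr h3.symm))
        have hregSC : ∀ e ∈ S \ C, (pA ea (S \ C) e).card = 2 ∧ (pB eb (S \ C) e).card = 2 := by
          intro e he
          rw [hpASC e he, hpBSC e he]
          exact hreg e (Finset.mem_sdiff.mp he).1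
        have hcardSC : (S \ C).card ≤ n := by
          have h1 := Finset.card_sdiff_of_subset hCsub
          have h2 := Finset.card_pos.mpr ⟨z₀, hz₀C⟩
          have h3 := Finset.card_le_card hCsub
          omega
        obtain ⟨f₂, hf₂⟩ := IH (S \ C) hcardSC hregSC
        refine ⟨fun x => if x ∈ C then f₁ x else f₂ x, ?_, ?_⟩
        · intro x hx y hy hne heq
          by_cases hxC : x ∈ C <;> by_cases hyC : y ∈ C
          · simp only [if_pos hxC, if_pos hyC]
            exact hf₁.1 x hxC y hyC hne heq
          · exact absurd (hclosed x hxC y hy (Or.inl heq.symm)) hyC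
          · exact absurd (hclosed y hyC x hx (Or.inl heq)) hxC
          · simp only [if_neg hxC, if_neg hyC]
            exact hf₂.1 x (Finset.mem_sdiff.mpr ⟨hx, hxC⟩) y (Finset.mem_sdiff.mpr ⟨hy, hyC⟩) hne heq
        · intro x hx y hy hne heq
          by_cases hxC : x ∈ C <;> by_cases hyC : y ∈ C
          · simp only [if_pos hxC, if_pos hyC]
            exact hf₁.2 x hxC y hyC hne heq
          · exact absurd (hclosed x hxC y hy (Or.inr heq.symm)) hyC
          · exact absurd (hclosed y hyC x hx (Or.inr heq)) hxC
          · simp only [if_neg hxC, if_neg hyC]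
            exact hf₂.2 x (Finset.mem_sdiff.mpr ⟨hx, hxC⟩) y (Finset.mem_sdiff.mpr ⟨hy, hyC⟩) hne heq

lemma main (hA : ∀ v : A, (Finset.univ.filter fun e => ea e = v).card ≤ 3)
    (hB : ∀ v : B, (Finset.univ.filter fun e => eb e = v).card ≤ 3) :
    ∀ n (S : Finset E), S.card ≤ n → ∃ f, ProperOn ea eb r f S := by
  intro n
  induction n with
  | zero =>
      intro S hcard
      have hS : S = ∅ := Finset.card_eq_zero.mp (by omega)
      rw [hS]
      exact ⟨_, empty_proper⟩
  | succ n IH =>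
      intro S hcard
      by_cases hex : ∃ e ∈ S, (pA ea S e).card + (pB eb S e).card ≤ 3
      · obtain ⟨e, heS, hle⟩ := hex
        obtain ⟨f, hf⟩ := IH (S.erase e) (by
          have := Finset.card_erase_of_mem heS
          have := Finset.card_pos.mpr ⟨e, heS⟩
          omega)
        have hbound : (forb ea eb r f (S.erase e) e).card ≤ 3 := by
          refine le_trans card_forb_le ?_
          rw [pA_erase_self, pB_erase_self]
          exact hle
        obtain ⟨v, hv⟩ := exists_good hbound
        have hext := extend hf (by simp) hv
        rw [Finset.insert_erase heS] at hext
        exact ⟨_, hext⟩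
      · push_neg at hex
        refine hard S.card S le_rfl ?_
        intro e he
        have h4 : 4 ≤ (pA ea S e).card + (pB eb S e).card := hex e he
        have hA2 : (pA ea S e).card ≤ 2 := by
          have hsub : pA ea S e ⊆ (Finset.univ.filter fun g => ea g = ea e).erase e := by
            intro g hg
            rw [mem_pA] at hg
            exact Finset.mem_erase.mpr
              ⟨hg.2.1, Finset.mem_filter.mpr ⟨Finset.mem_univ g, hg.2.2⟩⟩
          have hce : e ∈ Finset.univ.filter fun g => ea g = ea e :=
            Finset.mem_filter.mpr ⟨Finset.mem_univ e, rfl⟩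
          have h5 := Finset.card_le_card hsub
          rw [Finset.card_erase_of_mem hce] at h5
          have h6 := hA (ea e)
          omega
        have hB2 : (pB eb S e).card ≤ 2 := by
          have hsub : pB eb S e ⊆ (Finset.univ.filter fun g => eb g = eb e).erase e := by
            intro g hg
            rw [mem_pB] at hg
            exact Finset.mem_erase.mpr
              ⟨hg.2.1, Finset.mem_filter.mpr ⟨Finset.mem_univ g, hg.2.2⟩⟩
          have hce : e ∈ Finset.univ.filter fun g => eb g = eb e :=
            Finset.mem_filter.mpr ⟨Finset.mem_univ e, rfl⟩
          have h5 := Finset.card_le_card hsub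
          rw [Finset.card_erase_of_mem hce] at h5
          have h6 := hB (eb e)
          omega
        exact ⟨by omega, by omega⟩

end

end DelayCol

/-- The Haxell–Wilfong–Winkler delay conjecture for d = 3: a bipartite
multigraph of maximum degree at most 3 with integer edge delays admits an
edge colouring with colours in ℤ/4 that is proper on `A`, and such that the
delayed colouring `e ↦ f e + r e (mod 4)` is proper on `B`. -/
theorem stmt_1 {A B E : Type} [Fintype E] [DecidableEq A] [DecidableEq B]
    (ea : E → A) (eb : E → B)
    (hA : ∀ v : A, (Finset.univ.filter fun e => ea e = v).card ≤ 3)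
    (hB : ∀ v : B, (Finset.univ.filter fun e => eb e = v).card ≤ 3)
    (r : E → ℤ) :
    ∃ f : E → ZMod 4,
      (∀ e g : E, e ≠ g → ea e = ea g → f e ≠ f g) ∧
      (∀ e g : E, e ≠ g → eb e = eb g →
        f e + (r e : ZMod 4) ≠ f g + (r g : ZMod 4)) := by
  obtain ⟨f, hf⟩ := DelayCol.main (ea := ea) (eb := eb) (r := r) hA hB
    Finset.univ.card Finset.univ le_rfl
  exact ⟨f,
    fun e g hne heq => hf.1 e (Finset.mem_univ e) g (Finset.mem_univ g) hne heq,
    fun e g hne heq => hf.2 e (Finset.mem_univ e) g (Finset.mem_univ g) hne heq⟩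
end

section
/- Suppose Conjecture A holds: for every 3-partite 3-uniform hypergraph H with classes V1, V2, V3 satisfying |V2| = |V3| = |V1| + 1, such that for each x ∈ V1 the hyperedges containing x induce a perfect matching of V2 ∪ V3, there is a matching of H covering all of V1. Then every n × n Latin square contains a partial transversal of size n − 1. -/
/-- Conjecture A (Aharoni–Berger–Ziv) implies the Brualdi–Stein conjecture:
if every 3-partite 3-uniform hypergraph with |V2| = |V3| = |V1| + 1, in which
the edges through each x ∈ V1 form a perfect matching (bijection) between V2
and V3, has a matching covering V1, then every n × n Latin square contains a
partial transversal of size n − 1. -/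
theorem stmt_7
    (conjA : ∀ (V1 V2 V3 : Type) [Fintype V1] [Fintype V2] [Fintype V3]
      (H : Set (V1 × V2 × V3)),
      Fintype.card V2 = Fintype.card V1 + 1 →
      Fintype.card V3 = Fintype.card V1 + 1 →
      (∀ x : V1, ∃ σ : V2 ≃ V3, ∀ (v2 : V2) (v3 : V3),
        (x, v2, v3) ∈ H ↔ σ v2 = v3) →
      ∃ m : V1 → V2 × V3, (∀ x, (x, m x) ∈ H) ∧
        ∀ x y, x ≠ y → (m x).1 ≠ (m y).1 ∧ (m x).2 ≠ (m y).2)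
    (n : ℕ) (L : Fin n × Fin n → Fin n)
    (hrow : ∀ i : Fin n, Function.Injective fun j => L (i, j))
    (hcol : ∀ j : Fin n, Function.Injective fun i => L (i, j)) :
    ∃ T : Finset (Fin n × Fin n), T.card = n - 1 ∧
      ∀ c ∈ T, ∀ c' ∈ T, c ≠ c' →
        c.1 ≠ c'.1 ∧ c.2 ≠ c'.2 ∧ L c ≠ L c' := by
  rcases Nat.eq_zero_or_pos n with hn | hn
  · exact ⟨∅, by simp [hn], by simp⟩
  · -- embed Fin (n-1) into Fin n
    have hle : n - 1 ≤ n := Nat.sub_le n 1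
    set e : Fin (n - 1) → Fin n := Fin.castLE hle with he
    have heinj : Function.Injective e := Fin.castLE_injective hle
    set H : Set (Fin (n - 1) × Fin n × Fin n) :=
      {p | L (e p.1, p.2.1) = p.2.2} with hH
    have hcard : Fintype.card (Fin n) = Fintype.card (Fin (n - 1)) + 1 := by
      simp [Nat.sub_add_cancel hn]
    have hperf : ∀ x : Fin (n - 1), ∃ σ : Fin n ≃ Fin n,
        ∀ (v2 v3 : Fin n), (x, v2, v3) ∈ H ↔ σ v2 = v3 := by
      intro x
      have hb : Function.Bijective fun j => L (e x, j) :=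
        (Finite.injective_iff_bijective).1 (hrow (e x))
      exact ⟨Equiv.ofBijective _ hb, fun v2 v3 => Iff.rfl⟩
    obtain ⟨m, hm, hdisj⟩ := conjA (Fin (n - 1)) (Fin n) (Fin n) H hcard hcard hperf
    refine ⟨Finset.univ.image (fun x => (e x, (m x).1)), ?_, ?_⟩
    · rw [Finset.card_image_of_injective _ (fun a b hab => heinj (congrArg Prod.fst hab))]
      simp
    · rintro c hc c' hc' hne
      simp only [Finset.mem_image, Finset.mem_univ, true_and] at hc hc'
      obtain ⟨x, rfl⟩ := hc
      obtain ⟨y, rfl⟩ := hc'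
      have hxy : x ≠ y := by rintro rfl; exact hne rfl
      obtain ⟨h1, h2⟩ := hdisj x y hxy
      refine ⟨fun h => hxy (heinj h), h1, ?_⟩
      have hx := hm x
      have hy := hm y
      simp only [hH, Set.mem_setOf_eq] at hx hy
      simpa [hx, hy] using h2
end

section
/- The distortion-colouring problem for bipartite multigraphs restricted to instances where each side consists of a single vertex is equivalent to the following: given d permutations r_1,...,r_d of {0,1,...,d}, there exist d pairwise distinct colours c_1,...,c_d ∈ {0,...,d} such that r_1(c_1),...,r_d(c_d) are pairwise distinct. Show that this statement follows from Conjecture A on 3-partite 3-uniform hypergraphs (with |V1| = d, |V2| = |V3| = d+1). -/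
/-- Conjecture A implies the single-vertex-pair case of the distortion
colouring problem: for any d permutations r_1,…,r_d of {0,…,d} there are
pairwise distinct colours c_1,…,c_d with r_1(c_1),…,r_d(c_d) pairwise
distinct. -/
theorem stmt_8
    (conjA : ∀ (V1 V2 V3 : Type) [Fintype V1] [Fintype V2] [Fintype V3]
      (H : Set (V1 × V2 × V3)),
      Fintype.card V2 = Fintype.card V1 + 1 →
      Fintype.card V3 = Fintype.card V1 + 1 →
      (∀ x : V1, ∃ σ : V2 ≃ V3, ∀ (v2 : V2) (v3 : V3),
        (x, v2, v3) ∈ H ↔ σ v2 = v3) →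
      ∃ m : V1 → V2 × V3, (∀ x, (x, m x) ∈ H) ∧
        ∀ x y, x ≠ y → (m x).1 ≠ (m y).1 ∧ (m x).2 ≠ (m y).2)
    (d : ℕ) (r : Fin d → Equiv.Perm (Fin (d + 1))) :
    ∃ c : Fin d → Fin (d + 1), Function.Injective c ∧
      Function.Injective fun i => r i (c i) := by
  obtain ⟨m, hm, hdist⟩ := conjA (Fin d) (Fin (d + 1)) (Fin (d + 1))
    {p | r p.1 p.2.1 = p.2.2} (by simp) (by simp)
    (fun x => ⟨r x, fun v2 v3 => Iff.rfl⟩)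
  refine ⟨fun i => (m i).1, ?_, ?_⟩
  · intro i j h
    by_contra hne
    exact (hdist i j hne).1 h
  · intro i j h
    by_contra hne
    have := hm i
    have hj := hm j
    simp only [Set.mem_setOf_eq] at this hj
    exact (hdist i j hne).2 (this ▸ hj ▸ h)
end

section
/- Let C = v_0 e_1 v_1 e_2 ... e_{2k} v_0 be an even cycle (length at least 4) whose edges each carry a permutation of {0,1,2,3}, and suppose each edge e is given a list L_e ⊆ {0,1,2,3} of allowed colours with |L_e| ≥ 2 for all e. Suppose moreover there are two consecutive edges e, e' of C (sharing a vertex v) with L_e ≠ L_{e'} and L_e ∩ L_{e'} ≠ ∅. Then C admits a proper colouring from the lists, i.e., an assignment f with f(e) ∈ L_e for all e such that consecutive edges of C receive distinct colours. -/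
lemma aux_greedy (n : ℕ) (hn : 0 < n) (L : ZMod n → Finset (Fin 4))
    (hsize : ∀ i, 2 ≤ (L i).card) (c : ZMod n) (a : Fin 4)
    (ha1 : a ∈ L c) (ha2 : a ∉ L (c - 1)) :
    ∃ f : ZMod n → Fin 4, ∀ i, f i ∈ L i ∧ f i ≠ f (i + 1) := by
  haveI : NeZero n := ⟨hn.ne'⟩
  have hch : ∀ (s : Finset (Fin 4)) (b : Fin 4), 2 ≤ s.card → ∃ x ∈ s, x ≠ b := by
    intro s b hs
    have hne : (s \ {b}).Nonempty := by
      rw [Finset.sdiff_nonempty]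
      intro h
      have := Finset.card_le_card h
      simp at this
      omega
    obtain ⟨x, hx⟩ := hne
    rw [Finset.mem_sdiff, Finset.mem_singleton] at hx
    exact ⟨x, hx.1, hx.2⟩
  let g : ℕ → Fin 4 := fun m => Nat.rec a
    (fun m gm => Classical.choose (hch (L (c + ((m+1 : ℕ) : ZMod n))) gm (hsize _))) m
  have hg0 : g 0 = a := rfl
  have hgmem : ∀ m, g m ∈ L (c + (m : ℕ)) := by
    intro m
    cases m with
    | zero => simpa [hg0] using ha1
    | succ m => exact (Classical.choose_spec (hch (L (c + ((m+1 : ℕ) : ZMod n))) (g m) (hsize _))).1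
  have hgne : ∀ m, g (m+1) ≠ g m := fun m =>
    (Classical.choose_spec (hch (L (c + ((m+1 : ℕ) : ZMod n))) (g m) (hsize _))).2
  refine ⟨fun i => g (i - c).val, fun i => ?_⟩
  constructor
  · have h := hgmem (i - c).val
    rwa [ZMod.natCast_val, ZMod.cast_id, add_sub_cancel] at h
  · by_cases hi : i = c - 1
    · subst hi
      have h1 : (c - 1 + 1 - c : ZMod n) = 0 := by ring
      have h2 : (c - 1 - c : ZMod n) = -1 := by ring
      show g (c - 1 - c).val ≠ g (c - 1 + 1 - c).val
      rw [h1, h2]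
      simp only [ZMod.val_zero, hg0]
      intro h
      apply ha2
      have hm := hgmem (-1 : ZMod n).val
      rw [ZMod.natCast_val, ZMod.cast_id] at hm
      rw [h] at hm
      rwa [← sub_eq_add_neg] at hm
    · have h3 : (i - c) ≠ -1 := by
        intro h; apply hi; linear_combination h
      have h4 : (i - c).val ≠ n - 1 := by
        intro h; apply h3
        have hv : i - c = (((i - c).val : ℕ) : ZMod n) := by
          rw [ZMod.natCast_val, ZMod.cast_id]
        rw [hv, h, Nat.cast_sub (by omega : 1 ≤ n), ZMod.natCast_self]
        simp
      have h5 : (i - c).val < n := ZMod.val_lt _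
      have h6 : (i - c).val + 1 < n := by omega
      have h7 : i + 1 - c = (((i - c).val + 1 : ℕ) : ZMod n) := by
        push_cast
        rw [ZMod.natCast_val, ZMod.cast_id]
        ring
      show g (i - c).val ≠ g (i + 1 - c).val
      rw [h7, ZMod.val_cast_of_lt h6]
      exact (hgne _).symm

/-- List edge colouring of an even cycle of length 2k ≥ 4: if every edge has
a list of size at least 2 from {0,1,2,3}, and some two consecutive edges have
unequal but intersecting lists, then the cycle admits a proper colouring
from the lists (consecutive edges coloured differently). Edges are indexed
by ℤ/2k, with edges i and i+1 consecutive. -/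
theorem stmt_10 (k : ℕ) (hk : 2 ≤ k)
    (L : ZMod (2 * k) → Finset (Fin 4))
    (hsize : ∀ i, 2 ≤ (L i).card)
    (hgood : ∃ i, L i ≠ L (i + 1) ∧ (L i ∩ L (i + 1)).Nonempty) :
    ∃ f : ZMod (2 * k) → Fin 4, ∀ i, f i ∈ L i ∧ f i ≠ f (i + 1) := by
  obtain ⟨i, hne, -⟩ := hgood
  have hn : 0 < 2 * k := by omega
  by_cases hsub : L (i + 1) ⊆ L i
  · -- then ∃ a ∈ L i \ L (i+1); reverse the cycle
    have hnsub : ¬ L i ⊆ L (i + 1) := fun h => hne (Finset.Subset.antisymm h hsub)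
    obtain ⟨a, ha1, ha2⟩ := Finset.not_subset.mp hnsub
    set σ : ZMod (2 * k) → ZMod (2 * k) := fun j => 2 * i + 1 - j with hσ
    obtain ⟨f', hf'⟩ := aux_greedy (2 * k) hn (fun j => L (σ j)) (fun j => hsize _) (i + 1) a
      (by simp only [hσ]; rw [show 2 * i + 1 - (i + 1) = i by ring]; exact ha1)
      (by simp only [hσ]; rw [show 2 * i + 1 - (i + 1 - 1) = i + 1 by ring]; exact ha2)
    refine ⟨fun j => f' (σ j), fun j => ?_⟩
    constructor
    · have := (hf' (σ j)).1
      simp only [hσ] at this ⊢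
      rwa [show 2 * i + 1 - (2 * i + 1 - j) = j by ring] at this
    · have h := (hf' (σ j - 1)).2
      rw [sub_add_cancel] at h
      have h2 : σ (j + 1) = σ j - 1 := by simp only [hσ]; ring
      show f' (σ j) ≠ f' (σ (j + 1))
      rw [h2]
      exact h.symm
  · obtain ⟨a, ha1, ha2⟩ := Finset.not_subset.mp hsub
    exact aux_greedy (2 * k) hn L hsize (i + 1) a ha1 (by rwa [add_sub_cancel_right])
end
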